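/- arXiv:2510.20009 — 4 statements merged into one kernel-verified Lean document; each statement's English description precedes it below -/
import Mathlib

section
/- If Y_1,...,Y_N are mutually conditionally independent given X, then the set function g(A) := I(X; Y_A) is submodular: for all A ⊆ B ⊆ {1,...,N} and j ∉ B, I(X; Y_j | Y_A) ≥ I(X; Y_j | Y_B). -/
open Finset

/-- A probability distribution on a finite sample space, given by weights. -/
structure DiscProb (Ω : Type) [Fintype Ω] where
  w : Ω → ℝ
  nonneg : ∀ ω, 0 ≤ w ω
  sum_one : ∑ ω, w ω = 1

namespace DiscProb

variable {Ω : Type} [Fintype Ω]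

/-- Probability that the discrete random variable `X` takes the value `a`. -/
noncomputable def prob (μ : DiscProb Ω) {α : Type} [DecidableEq α]
    (X : Ω → α) (a : α) : ℝ :=
  ∑ ω ∈ Finset.univ.filter (fun ω => X ω = a), μ.w ω

/-- Shannon entropy of a discrete random variable. -/
noncomputable def entropy (μ : DiscProb Ω) {α : Type} [Fintype α] [DecidableEq α]
    (X : Ω → α) : ℝ :=
  -∑ a : α, μ.prob X a * Real.log (μ.prob X a)

/-- Conditional Shannon entropy `H(X | Y) = H(X, Y) - H(Y)`. -/
noncomputable def condEntropy (μ : DiscProb Ω) {α β : Type}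
    [Fintype α] [DecidableEq α] [Fintype β] [DecidableEq β]
    (X : Ω → α) (Y : Ω → β) : ℝ :=
  μ.entropy (fun ω => (X ω, Y ω)) - μ.entropy Y

/-- Mutual information `I(X ; Y) = H(X) + H(Y) - H(X, Y)`. -/
noncomputable def mutualInfo (μ : DiscProb Ω) {α β : Type}
    [Fintype α] [DecidableEq α] [Fintype β] [DecidableEq β]
    (X : Ω → α) (Y : Ω → β) : ℝ :=
  μ.entropy X + μ.entropy Y - μ.entropy (fun ω => (X ω, Y ω))

/-- Conditional mutual information
`I(X ; Y | Z) = H(X,Z) + H(Y,Z) - H(X,Y,Z) - H(Z)`. -/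
noncomputable def condMutualInfo (μ : DiscProb Ω) {α β γ : Type}
    [Fintype α] [DecidableEq α] [Fintype β] [DecidableEq β]
    [Fintype γ] [DecidableEq γ]
    (X : Ω → α) (Y : Ω → β) (Z : Ω → γ) : ℝ :=
  μ.entropy (fun ω => (X ω, Z ω)) + μ.entropy (fun ω => (Y ω, Z ω))
    - μ.entropy (fun ω => (X ω, Y ω, Z ω)) - μ.entropy Z

end DiscProb

/-- The joint random variable `Y_A = (Y_i)_{i ∈ A}` of a family of random variables. -/
def jointObs {Ω ι : Type} {𝒪 : ι → Type} (Y : ∀ i, Ω → 𝒪 i) (A : Finset ι) :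
    Ω → ((i : A) → 𝒪 i.1) := fun ω i => Y i.1 ω

/-- The random variables `Y_i, i ∈ ι` are mutually conditionally independent given `X`:
for every finite subset `A`, `P(Y_A = y | X = x) = ∏_{i ∈ A} P(Y_i = y_i | X = x)`,
written in a division-free form. -/
def iCondIndepGiven {Ω : Type} [Fintype Ω] {α ι : Type} [DecidableEq α]
    {𝒪 : ι → Type} [∀ i, DecidableEq (𝒪 i)] (μ : DiscProb Ω)
    (X : Ω → α) (Y : ∀ i, Ω → 𝒪 i) : Prop :=
  ∀ (A : Finset ι) (y : (i : A) → 𝒪 i.1) (x : α),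
    μ.prob (fun ω => (jointObs Y A ω, X ω)) (y, x) * (μ.prob X x) ^ A.card
      = μ.prob X x * ∏ i : A, μ.prob (fun ω => (Y i.1 ω, X ω)) (y i, x)

/-- `Y₁` and `Y₂` are conditionally independent given `X`:
`P(Y₁ = y₁, Y₂ = y₂ | X = x) = P(Y₁ = y₁ | X = x) ⬝ P(Y₂ = y₂ | X = x)`,
written in a division-free form. -/
def pairCondIndepGiven {Ω : Type} [Fintype Ω] {α β γ : Type}
    [DecidableEq α] [DecidableEq β] [DecidableEq γ] (μ : DiscProb Ω)
    (Y₁ : Ω → β) (Y₂ : Ω → γ) (X : Ω → α) : Prop :=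
  ∀ (y₁ : β) (y₂ : γ) (x : α),
    μ.prob (fun ω => (Y₁ ω, Y₂ ω, X ω)) (y₁, y₂, x) * μ.prob X x
      = μ.prob (fun ω => (Y₁ ω, X ω)) (y₁, x) * μ.prob (fun ω => (Y₂ ω, X ω)) (y₂, x)

namespace DiscProb

variable {Ω : Type} [Fintype Ω]
variable (μ : DiscProb Ω)

lemma prob_nonneg {V : Type} [DecidableEq V] (T : Ω → V) (v : V) : 0 ≤ μ.prob T v :=
  Finset.sum_nonneg fun ω _ => μ.nonneg ω

lemma sum_prob {V : Type} [Fintype V] [DecidableEq V] (T : Ω → V) : ∑ v, μ.prob T v = 1 := by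
  unfold prob; rw [Finset.sum_fiberwise]; exact μ.sum_one

lemma prob_comp {V S : Type} [Fintype V] [DecidableEq V] [DecidableEq S]
    (T : Ω → V) (f : V → S) (s : S) :
    μ.prob (fun ω => f (T ω)) s = ∑ v ∈ univ.filter (fun v => f v = s), μ.prob T v := by
  classical
  unfold prob
  rw [Finset.sum_fiberwise_eq_sum_filter univ (univ.filter (fun v => f v = s)) T μ.w]
  apply Finset.sum_congr _ (fun _ _ => rfl)
  ext ω
  simp

lemma prob_le_prob_comp {V S : Type} [Fintype V] [DecidableEq V] [DecidableEq S]
    (T : Ω → V) (f : V → S) (v : V) :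
    μ.prob T v ≤ μ.prob (fun ω => f (T ω)) (f v) := by
  rw [prob_comp μ T f]
  exact Finset.single_le_sum (fun v' _ => μ.prob_nonneg T v')
    (Finset.mem_filter.mpr ⟨Finset.mem_univ v, rfl⟩)

lemma sum_prob_comp_mul {V S : Type} [Fintype V] [DecidableEq V] [Fintype S] [DecidableEq S]
    (T : Ω → V) (f : V → S) (F : S → ℝ) :
    ∑ s, μ.prob (fun ω => f (T ω)) s * F s = ∑ v, μ.prob T v * F (f v) := by
  rw [← Finset.sum_fiberwise univ f (fun v => μ.prob T v * F (f v))]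
  refine Finset.sum_congr rfl fun s _ => ?_
  rw [prob_comp μ T f, Finset.sum_mul]
  exact Finset.sum_congr rfl fun v hv => by rw [(Finset.mem_filter.mp hv).2]

lemma entropy_comp_eq {V S : Type} [Fintype V] [DecidableEq V] [Fintype S] [DecidableEq S]
    (T : Ω → V) (f : V → S) :
    μ.entropy (fun ω => f (T ω))
      = -∑ v, μ.prob T v * Real.log (μ.prob (fun ω => f (T ω)) (f v)) := by
  unfold entropy
  rw [sum_prob_comp_mul μ T f (fun s => Real.log (μ.prob (fun ω => f (T ω)) s))]

lemma prob_comp_injective {V S : Type} [Fintype V] [DecidableEq V] [DecidableEq S]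
    (T : Ω → V) {f : V → S} (hf : Function.Injective f) (v : V) :
    μ.prob (fun ω => f (T ω)) (f v) = μ.prob T v := by
  rw [prob_comp μ T f]
  have : univ.filter (fun v' => f v' = f v) = {v} := by
    ext v'; simp [hf.eq_iff]
  rw [this, Finset.sum_singleton]

lemma entropy_comp_injective {V S : Type} [Fintype V] [DecidableEq V] [Fintype S] [DecidableEq S]
    (T : Ω → V) {f : V → S} (hf : Function.Injective f) :
    μ.entropy (fun ω => f (T ω)) = μ.entropy T := by
  rw [entropy_comp_eq]
  unfold entropy
  congr 1
  exact Finset.sum_congr rfl fun v _ => by rw [prob_comp_injective μ T hf]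

lemma sum_prob_fst {A C : Type} [Fintype A] [DecidableEq A] [DecidableEq C]
    (P : Ω → A) (Q : Ω → C) (c : C) :
    ∑ a, μ.prob (fun ω => (P ω, Q ω)) (a, c) = μ.prob Q c := by
  unfold prob
  simp only [Finset.sum_filter, Prod.mk.injEq]
  rw [Finset.sum_comm]
  refine Finset.sum_congr rfl fun ω _ => ?_
  by_cases h : Q ω = c <;> simp [h]

lemma condMutualInfo_nonneg {A B C : Type} [Fintype A] [DecidableEq A]
    [Fintype B] [DecidableEq B] [Fintype C] [DecidableEq C]
    (U : Ω → A) (V : Ω → B) (W : Ω → C) :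
    0 ≤ μ.condMutualInfo U V W := by
  classical
  have e1 : μ.entropy (fun ω => (U ω, W ω))
      = -∑ v : A × B × C, μ.prob (fun ω => (U ω, V ω, W ω)) v
          * Real.log (μ.prob (fun ω => (U ω, W ω)) (v.1, v.2.2)) := by
    simpa using μ.entropy_comp_eq (fun ω => (U ω, V ω, W ω)) (fun v => (v.1, v.2.2))
  have e2 : μ.entropy (fun ω => (V ω, W ω))
      = -∑ v : A × B × C, μ.prob (fun ω => (U ω, V ω, W ω)) v
          * Real.log (μ.prob (fun ω => (V ω, W ω)) v.2) := by
    simpa using μ.entropy_comp_eq (fun ω => (U ω, V ω, W ω)) (fun v => v.2)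
  have e3 : μ.entropy W
      = -∑ v : A × B × C, μ.prob (fun ω => (U ω, V ω, W ω)) v
          * Real.log (μ.prob W v.2.2) := by
    simpa using μ.entropy_comp_eq (fun ω => (U ω, V ω, W ω)) (fun v => v.2.2)
  have e4 : μ.entropy (fun ω => (U ω, V ω, W ω))
      = -∑ v : A × B × C, μ.prob (fun ω => (U ω, V ω, W ω)) v
          * Real.log (μ.prob (fun ω => (U ω, V ω, W ω)) v) := rfl
  have key : μ.condMutualInfo U V W
      = ∑ v : A × B × C,
          (μ.prob (fun ω => (U ω, V ω, W ω)) v * Real.log (μ.prob (fun ω => (U ω, V ω, W ω)) v)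
           + μ.prob (fun ω => (U ω, V ω, W ω)) v * Real.log (μ.prob W v.2.2)
           - μ.prob (fun ω => (U ω, V ω, W ω)) v
              * Real.log (μ.prob (fun ω => (U ω, W ω)) (v.1, v.2.2))
           - μ.prob (fun ω => (U ω, V ω, W ω)) v
              * Real.log (μ.prob (fun ω => (V ω, W ω)) v.2)) := by
    unfold condMutualInfo
    rw [e1, e2, e3, e4, Finset.sum_sub_distrib, Finset.sum_sub_distrib,
      Finset.sum_add_distrib]
    ring
  rw [key]
  have hple13 : ∀ v : A × B × C, μ.prob (fun ω => (U ω, V ω, W ω)) v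
      ≤ μ.prob (fun ω => (U ω, W ω)) (v.1, v.2.2) := by
    intro v
    simpa using μ.prob_le_prob_comp (fun ω => (U ω, V ω, W ω)) (fun v => (v.1, v.2.2)) v
  have hple23 : ∀ v : A × B × C, μ.prob (fun ω => (U ω, V ω, W ω)) v
      ≤ μ.prob (fun ω => (V ω, W ω)) v.2 := by
    intro v
    simpa using μ.prob_le_prob_comp (fun ω => (U ω, V ω, W ω)) (fun v => v.2) v
  have hple3 : ∀ v : A × B × C, μ.prob (fun ω => (U ω, V ω, W ω)) v
      ≤ μ.prob W v.2.2 := by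
    intro v
    simpa using μ.prob_le_prob_comp (fun ω => (U ω, V ω, W ω)) (fun v => v.2.2) v
  set q : A × B × C → ℝ := fun v =>
    if μ.prob (fun ω => (U ω, V ω, W ω)) v = 0 then 0
    else μ.prob (fun ω => (U ω, W ω)) (v.1, v.2.2) * μ.prob (fun ω => (V ω, W ω)) v.2
          / μ.prob W v.2.2 with hq
  have hterm : ∀ v ∈ (univ : Finset (A × B × C)),
      μ.prob (fun ω => (U ω, V ω, W ω)) v - q v ≤
      (μ.prob (fun ω => (U ω, V ω, W ω)) v * Real.log (μ.prob (fun ω => (U ω, V ω, W ω)) v)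
       + μ.prob (fun ω => (U ω, V ω, W ω)) v * Real.log (μ.prob W v.2.2)
       - μ.prob (fun ω => (U ω, V ω, W ω)) v
          * Real.log (μ.prob (fun ω => (U ω, W ω)) (v.1, v.2.2))
       - μ.prob (fun ω => (U ω, V ω, W ω)) v
          * Real.log (μ.prob (fun ω => (V ω, W ω)) v.2)) := by
    intro v _
    by_cases h0 : μ.prob (fun ω => (U ω, V ω, W ω)) v = 0
    · simp [hq, h0]
    · have hpv : 0 < μ.prob (fun ω => (U ω, V ω, W ω)) v :=
        lt_of_le_of_ne (μ.prob_nonneg _ v) (Ne.symm h0)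
      have h13 : 0 < μ.prob (fun ω => (U ω, W ω)) (v.1, v.2.2) :=
        lt_of_lt_of_le hpv (hple13 v)
      have h23 : 0 < μ.prob (fun ω => (V ω, W ω)) v.2 := lt_of_lt_of_le hpv (hple23 v)
      have h3 : 0 < μ.prob W v.2.2 := lt_of_lt_of_le hpv (hple3 v)
      have hqv : q v = μ.prob (fun ω => (U ω, W ω)) (v.1, v.2.2)
          * μ.prob (fun ω => (V ω, W ω)) v.2 / μ.prob W v.2.2 := by
        rw [hq]; simp [h0]
      have hqpos : 0 < q v := by rw [hqv]; positivity
      have hlog : Real.log (q v / μ.prob (fun ω => (U ω, V ω, W ω)) v)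
          ≤ q v / μ.prob (fun ω => (U ω, V ω, W ω)) v - 1 :=
        Real.log_le_sub_one_of_pos (by positivity)
      have hlogq : Real.log (q v) = Real.log (μ.prob (fun ω => (U ω, W ω)) (v.1, v.2.2))
          + Real.log (μ.prob (fun ω => (V ω, W ω)) v.2) - Real.log (μ.prob W v.2.2) := by
        rw [hqv, Real.log_div (by positivity) (ne_of_gt h3),
          Real.log_mul (ne_of_gt h13) (ne_of_gt h23)]
      rw [Real.log_div (ne_of_gt hqpos) h0] at hlog
      have h5 := mul_le_mul_of_nonneg_left hlog (le_of_lt hpv)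
      rw [mul_sub, mul_sub, mul_div_cancel₀ _ h0] at h5
      nlinarith [h5, hlogq]
  refine le_trans ?_ (Finset.sum_le_sum hterm)
  rw [Finset.sum_sub_distrib, μ.sum_prob (fun ω => (U ω, V ω, W ω))]
  have hqle : ∀ v ∈ (univ : Finset (A × B × C)), q v ≤
      (if μ.prob W v.2.2 = 0 then 0
       else μ.prob (fun ω => (U ω, W ω)) (v.1, v.2.2) * μ.prob (fun ω => (V ω, W ω)) v.2
            / μ.prob W v.2.2) := by
    intro v _
    by_cases h3 : μ.prob W v.2.2 = 0
    · have h0 : μ.prob (fun ω => (U ω, V ω, W ω)) v = 0 :=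
        le_antisymm (h3 ▸ hple3 v) (μ.prob_nonneg _ v)
      simp [hq, h0, h3]
    · by_cases h0 : μ.prob (fun ω => (U ω, V ω, W ω)) v = 0
      · rw [hq]
        simp only [h0, if_true, if_neg h3]
        have h3' : 0 < μ.prob W v.2.2 := lt_of_le_of_ne (μ.prob_nonneg W _) (Ne.symm h3)
        have := μ.prob_nonneg (fun ω => (U ω, W ω)) (v.1, v.2.2)
        have := μ.prob_nonneg (fun ω => (V ω, W ω)) v.2
        positivity
      · simp [hq, h0, h3]
  have hsumr : ∑ v : A × B × C,
      (if μ.prob W v.2.2 = 0 then 0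
       else μ.prob (fun ω => (U ω, W ω)) (v.1, v.2.2) * μ.prob (fun ω => (V ω, W ω)) v.2
            / μ.prob W v.2.2) ≤ 1 := by
    have step1 : ∑ v : A × B × C,
        (if μ.prob W v.2.2 = 0 then 0
         else μ.prob (fun ω => (U ω, W ω)) (v.1, v.2.2) * μ.prob (fun ω => (V ω, W ω)) v.2
              / μ.prob W v.2.2)
        = ∑ c : C, ∑ a : A, ∑ b : B,
            (if μ.prob W c = 0 then 0
             else μ.prob (fun ω => (U ω, W ω)) (a, c) * μ.prob (fun ω => (V ω, W ω)) (b, c)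
                  / μ.prob W c) := by
      rw [Fintype.sum_prod_type]
      simp only [Fintype.sum_prod_type]
      rw [show (∑ a : A, ∑ b : B, ∑ c : C,
            (if μ.prob W c = 0 then 0
             else μ.prob (fun ω => (U ω, W ω)) (a, c) * μ.prob (fun ω => (V ω, W ω)) (b, c)
                  / μ.prob W c))
          = ∑ a : A, ∑ c : C, ∑ b : B,
            (if μ.prob W c = 0 then 0
             else μ.prob (fun ω => (U ω, W ω)) (a, c) * μ.prob (fun ω => (V ω, W ω)) (b, c)
                  / μ.prob W c)
          from Finset.sum_congr rfl fun a _ => Finset.sum_comm]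
      exact Finset.sum_comm
    rw [step1]
    have step2 : ∀ c : C, (∑ a : A, ∑ b : B,
        (if μ.prob W c = 0 then 0
         else μ.prob (fun ω => (U ω, W ω)) (a, c) * μ.prob (fun ω => (V ω, W ω)) (b, c)
              / μ.prob W c))
        = if μ.prob W c = 0 then 0 else μ.prob W c := by
      intro c
      by_cases h3 : μ.prob W c = 0
      · simp [h3]
      · simp only [if_neg h3]
        rw [show (∑ a : A, ∑ b : B,
            μ.prob (fun ω => (U ω, W ω)) (a, c) * μ.prob (fun ω => (V ω, W ω)) (b, c)
              / μ.prob W c)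
            = (∑ a : A, μ.prob (fun ω => (U ω, W ω)) (a, c))
              * (∑ b : B, μ.prob (fun ω => (V ω, W ω)) (b, c)) / μ.prob W c from by
          simp only [Finset.sum_mul_sum, Finset.sum_div]]
        rw [μ.sum_prob_fst U W c, μ.sum_prob_fst V W c, mul_div_assoc, div_self h3, mul_one]
    calc ∑ c : C, ∑ a : A, ∑ b : B,
          (if μ.prob W c = 0 then 0
           else μ.prob (fun ω => (U ω, W ω)) (a, c) * μ.prob (fun ω => (V ω, W ω)) (b, c)
                / μ.prob W c)
        = ∑ c : C, (if μ.prob W c = 0 then 0 else μ.prob W c) :=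
          Finset.sum_congr rfl fun c _ => step2 c
      _ ≤ ∑ c : C, μ.prob W c := Finset.sum_le_sum fun c _ => by
          by_cases h : μ.prob W c = 0 <;> simp [h, μ.prob_nonneg W c]
      _ = 1 := μ.sum_prob W
  have hfin : ∑ v : A × B × C, q v ≤ 1 := le_trans (Finset.sum_le_sum hqle) hsumr
  linarith

/-- Conditioning on more information reduces conditional entropy. -/
lemma condEntropy_comp_le {B C D : Type} [Fintype B] [DecidableEq B]
    [Fintype C] [DecidableEq C] [Fintype D] [DecidableEq D]
    (V : Ω → B) (Z : Ω → C) (f : C → D) :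
    μ.entropy (fun ω => (V ω, Z ω)) - μ.entropy Z
      ≤ μ.entropy (fun ω => (V ω, f (Z ω))) - μ.entropy (fun ω => f (Z ω)) := by
  have h := μ.condMutualInfo_nonneg V Z (fun ω => f (Z ω))
  unfold condMutualInfo at h
  have h1 : μ.entropy (fun ω => (Z ω, f (Z ω))) = μ.entropy Z := by
    have : Function.Injective (fun c : C => (c, f c)) := fun a b hab => (Prod.mk.injEq _ _ _ _ ▸ hab).1
    simpa using μ.entropy_comp_injective Z this
  have h2 : μ.entropy (fun ω => (V ω, Z ω, f (Z ω))) = μ.entropy (fun ω => (V ω, Z ω)) := by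
    have hinj : Function.Injective (fun p : B × C => (p.1, p.2, f p.2)) := by
      intro a b hab
      simp only [Prod.mk.injEq] at hab
      exact Prod.ext hab.1 hab.2.1
    simpa using μ.entropy_comp_injective (fun ω => (V ω, Z ω)) hinj
  rw [h1, h2] at h
  linarith

/-- Under pairwise conditional independence, `H(Y₁,Y₂,X) = H(Y₁,X) + H(Y₂,X) - H(X)`. -/
lemma entropy_of_pairCondIndep {A B C : Type} [Fintype A] [DecidableEq A]
    [Fintype B] [DecidableEq B] [Fintype C] [DecidableEq C]
    (Y₁ : Ω → B) (Y₂ : Ω → C) (X : Ω → A)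
    (hCI : ∀ (y₁ : B) (y₂ : C) (x : A),
      μ.prob (fun ω => (Y₁ ω, Y₂ ω, X ω)) (y₁, y₂, x) * μ.prob X x
        = μ.prob (fun ω => (Y₁ ω, X ω)) (y₁, x) * μ.prob (fun ω => (Y₂ ω, X ω)) (y₂, x)) :
    μ.entropy (fun ω => (Y₁ ω, Y₂ ω, X ω))
      = μ.entropy (fun ω => (Y₁ ω, X ω)) + μ.entropy (fun ω => (Y₂ ω, X ω)) - μ.entropy X := by
  classical
  have e1 : μ.entropy (fun ω => (Y₁ ω, X ω))
      = -∑ v : B × C × A, μ.prob (fun ω => (Y₁ ω, Y₂ ω, X ω)) v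
          * Real.log (μ.prob (fun ω => (Y₁ ω, X ω)) (v.1, v.2.2)) := by
    simpa using μ.entropy_comp_eq (fun ω => (Y₁ ω, Y₂ ω, X ω)) (fun v => (v.1, v.2.2))
  have e2 : μ.entropy (fun ω => (Y₂ ω, X ω))
      = -∑ v : B × C × A, μ.prob (fun ω => (Y₁ ω, Y₂ ω, X ω)) v
          * Real.log (μ.prob (fun ω => (Y₂ ω, X ω)) v.2) := by
    simpa using μ.entropy_comp_eq (fun ω => (Y₁ ω, Y₂ ω, X ω)) (fun v => v.2)
  have e3 : μ.entropy X
      = -∑ v : B × C × A, μ.prob (fun ω => (Y₁ ω, Y₂ ω, X ω)) v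
          * Real.log (μ.prob X v.2.2) := by
    simpa using μ.entropy_comp_eq (fun ω => (Y₁ ω, Y₂ ω, X ω)) (fun v => v.2.2)
  rw [e1, e2, e3]
  unfold entropy
  rw [show ∀ x y z : ℝ, -x + -y - -z = -(x + y - z) from fun x y z => by ring]
  congr 1
  rw [← Finset.sum_add_distrib, ← Finset.sum_sub_distrib]
  refine Finset.sum_congr rfl fun v _ => ?_
  by_cases h0 : μ.prob (fun ω => (Y₁ ω, Y₂ ω, X ω)) v = 0
  · simp [h0]
  · have hpv : 0 < μ.prob (fun ω => (Y₁ ω, Y₂ ω, X ω)) v :=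
      lt_of_le_of_ne (μ.prob_nonneg _ v) (Ne.symm h0)
    have h1 : 0 < μ.prob (fun ω => (Y₁ ω, X ω)) (v.1, v.2.2) := by
      refine lt_of_lt_of_le hpv ?_
      simpa using μ.prob_le_prob_comp (fun ω => (Y₁ ω, Y₂ ω, X ω)) (fun v => (v.1, v.2.2)) v
    have h2 : 0 < μ.prob (fun ω => (Y₂ ω, X ω)) v.2 := by
      refine lt_of_lt_of_le hpv ?_
      simpa using μ.prob_le_prob_comp (fun ω => (Y₁ ω, Y₂ ω, X ω)) (fun v => v.2) v
    have h3 : 0 < μ.prob X v.2.2 := by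
      refine lt_of_lt_of_le hpv ?_
      simpa using μ.prob_le_prob_comp (fun ω => (Y₁ ω, Y₂ ω, X ω)) (fun v => v.2.2) v
    have hv := hCI v.1 v.2.1 v.2.2
    have hlog : Real.log (μ.prob (fun ω => (Y₁ ω, Y₂ ω, X ω)) v)
        = Real.log (μ.prob (fun ω => (Y₁ ω, X ω)) (v.1, v.2.2))
          + Real.log (μ.prob (fun ω => (Y₂ ω, X ω)) v.2) - Real.log (μ.prob X v.2.2) := by
      have := congrArg Real.log hv
      rw [Real.log_mul h0 (ne_of_gt h3), Real.log_mul (ne_of_gt h1) (ne_of_gt h2)] at this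
      linarith
    rw [hlog]
    ring

lemma prob_congr {V V' : Type} [DecidableEq V] [DecidableEq V']
    (T : Ω → V) (T' : Ω → V') (v : V) (v' : V') (h : ∀ ω, T ω = v ↔ T' ω = v') :
    μ.prob T v = μ.prob T' v' := by
  unfold prob
  apply Finset.sum_congr _ (fun _ _ => rfl)
  ext ω
  simp [h ω]

lemma prob_le_of_imp {V V' : Type} [DecidableEq V] [DecidableEq V']
    (T : Ω → V) (T' : Ω → V') (v : V) (v' : V') (h : ∀ ω, T ω = v → T' ω = v') :
    μ.prob T v ≤ μ.prob T' v' := by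
  unfold prob
  apply Finset.sum_le_sum_of_subset_of_nonneg
  · intro ω hω
    simp only [Finset.mem_filter, Finset.mem_univ, true_and] at *
    exact h ω hω
  · exact fun ω _ _ => μ.nonneg ω

lemma pairCI_of_iCondIndep {α ι : Type} [DecidableEq α] [DecidableEq ι]
    {𝒪 : ι → Type} [∀ i, DecidableEq (𝒪 i)]
    (X : Ω → α) (Y : ∀ i, Ω → 𝒪 i) (hCI : iCondIndepGiven μ X Y)
    (B : Finset ι) (j : ι) (hj : j ∉ B)
    (yj : 𝒪 j) (yB : (i : B) → 𝒪 i.1) (x : α) :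
    μ.prob (fun ω => (Y j ω, jointObs Y B ω, X ω)) (yj, yB, x) * μ.prob X x
      = μ.prob (fun ω => (Y j ω, X ω)) (yj, x)
        * μ.prob (fun ω => (jointObs Y B ω, X ω)) (yB, x) := by
  classical
  have hjB' : j ∈ insert j B := Finset.mem_insert_self j B
  set y' : (i : (insert j B : Finset ι)) → 𝒪 i.1 := fun i =>
    if h : i.1 = j then cast (congrArg 𝒪 h.symm) yj
    else yB ⟨i.1, (Finset.mem_insert.mp i.2).resolve_left h⟩ with hy'
  have hy'j : y' ⟨j, hjB'⟩ = yj := by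
    rw [hy']; simp
  have hy'B : ∀ i : B, y' ⟨i.1, Finset.mem_insert_of_mem i.2⟩ = yB i := by
    intro i
    have hne : i.1 ≠ j := fun h => hj (h ▸ i.2)
    rw [hy']
    simp only [dif_neg hne]
  -- the joint event for B' coincides with the event (Y j, Y_B)
  have hEq : μ.prob (fun ω => (jointObs Y (insert j B) ω, X ω)) (y', x)
      = μ.prob (fun ω => (Y j ω, jointObs Y B ω, X ω)) (yj, yB, x) := by
    apply prob_congr
    intro ω
    simp only [Prod.mk.injEq, jointObs, funext_iff]
    constructor
    · rintro ⟨h1, h2⟩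
      refine ⟨?_, ?_, h2⟩
      · have := h1 ⟨j, hjB'⟩
        rwa [hy'j] at this
      · intro i
        have := h1 ⟨i.1, Finset.mem_insert_of_mem i.2⟩
        rwa [hy'B] at this
    · rintro ⟨h1, h2, h3⟩
      refine ⟨?_, h3⟩
      rintro ⟨iv, hi⟩
      by_cases h : iv = j
      · subst h
        rw [hy'] ; simp only [dif_pos rfl]
        simpa using h1
      · rw [hy']
        simp only [dif_neg h]
        exact h2 ⟨iv, (Finset.mem_insert.mp hi).resolve_left h⟩
  -- split the product over B'
  have hProd : ∏ i : (insert j B : Finset ι), μ.prob (fun ω => (Y i.1 ω, X ω)) (y' i, x)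
      = μ.prob (fun ω => (Y j ω, X ω)) (yj, x)
        * ∏ i : B, μ.prob (fun ω => (Y i.1 ω, X ω)) (yB i, x) := by
    rw [Finset.univ_eq_attach, Finset.univ_eq_attach, Finset.attach_insert,
      Finset.prod_insert, Finset.prod_image]
    · rw [hy'j]
      congr 1
      exact Finset.prod_congr rfl fun i _ => by rw [hy'B]
    · exact fun _ _ _ _ h => Subtype.ext (Subtype.mk.injEq _ _ _ _ ▸ h)
    · simp only [Finset.mem_image, Finset.mem_attach, Subtype.mk.injEq, true_and,
        Subtype.exists, exists_prop, exists_eq_right]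
      exact hj
  have h1 := hCI (insert j B) y' x
  have h2 := hCI B yB x
  rw [Finset.card_insert_of_notMem hj] at h1
  rw [hProd, hEq] at h1
  by_cases hp : μ.prob X x = 0
  · have hle : μ.prob (fun ω => (Y j ω, X ω)) (yj, x) ≤ μ.prob X x :=
      μ.prob_le_of_imp _ _ _ _ (fun ω h => by simpa using congrArg Prod.snd h)
    have h0 : μ.prob (fun ω => (Y j ω, X ω)) (yj, x) = 0 :=
      le_antisymm (hp ▸ hle) (μ.prob_nonneg _ _)
    rw [hp, h0, mul_zero, zero_mul]
  · have hpow : (μ.prob X x) ^ B.card ≠ 0 := pow_ne_zero _ hp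
    apply mul_right_cancel₀ hpow
    calc μ.prob (fun ω => (Y j ω, jointObs Y B ω, X ω)) (yj, yB, x) * μ.prob X x
          * μ.prob X x ^ B.card
        = μ.prob (fun ω => (Y j ω, jointObs Y B ω, X ω)) (yj, yB, x)
            * μ.prob X x ^ (B.card + 1) := by ring
      _ = μ.prob X x * (μ.prob (fun ω => (Y j ω, X ω)) (yj, x)
            * ∏ i : B, μ.prob (fun ω => (Y i.1 ω, X ω)) (yB i, x)) := h1
      _ = μ.prob (fun ω => (Y j ω, X ω)) (yj, x)
            * (μ.prob X x * ∏ i : B, μ.prob (fun ω => (Y i.1 ω, X ω)) (yB i, x)) := by ring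
      _ = μ.prob (fun ω => (Y j ω, X ω)) (yj, x)
            * (μ.prob (fun ω => (jointObs Y B ω, X ω)) (yB, x) * μ.prob X x ^ B.card) := by
          rw [← h2]
      _ = μ.prob (fun ω => (Y j ω, X ω)) (yj, x)
            * μ.prob (fun ω => (jointObs Y B ω, X ω)) (yB, x) * μ.prob X x ^ B.card := by ring

end DiscProb

variable {Ω α : Type} [Fintype Ω] [Fintype α] [DecidableEq α]
  {N : ℕ} {𝒪 : Fin N → Type} [∀ i, Fintype (𝒪 i)] [∀ i, DecidableEq (𝒪 i)]

/-- under mutual conditional independence of the `Y_i` given `X`,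
the set function `A ↦ I(X ; Y_A)` has diminishing returns:
for `A ⊆ B` and `j ∉ B`, `I(X ; Y_j | Y_A) ≥ I(X ; Y_j | Y_B)`. -/
theorem mutualInfo_submodular_diminishing_returns
    (μ : DiscProb Ω) (X : Ω → α) (Y : ∀ i, Ω → 𝒪 i)
    (hCI : iCondIndepGiven μ X Y)
    (A B : Finset (Fin N)) (j : Fin N) (hAB : A ⊆ B) (hj : j ∉ B) :
    μ.condMutualInfo X (Y j) (jointObs Y B) ≤ μ.condMutualInfo X (Y j) (jointObs Y A) := by
  classical
  have main : ∀ (S : Finset (Fin N)), j ∉ S →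
      μ.condMutualInfo X (Y j) (jointObs Y S)
        = (μ.entropy (fun ω => (Y j ω, jointObs Y S ω)) - μ.entropy (jointObs Y S))
          - μ.entropy (fun ω => (Y j ω, X ω)) + μ.entropy X := by
    intro S hS
    have hPCI := μ.pairCI_of_iCondIndep X Y hCI S j hS
    have hE := μ.entropy_of_pairCondIndep (Y j) (jointObs Y S) X
      (fun y1 y2 x => hPCI y1 y2 x)
    have r1 : μ.entropy (fun ω => (X ω, Y j ω, jointObs Y S ω))
        = μ.entropy (fun ω => (Y j ω, jointObs Y S ω, X ω)) := by
      have hinj : Function.Injective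
          (fun p : 𝒪 j × ((i : S) → 𝒪 i.1) × α => (p.2.2, p.1, p.2.1)) := by
        intro a b hab
        simp only [Prod.mk.injEq] at hab
        exact Prod.ext hab.2.1 (Prod.ext hab.2.2 hab.1)
      simpa using μ.entropy_comp_injective (fun ω => (Y j ω, jointObs Y S ω, X ω)) hinj
    have r2 : μ.entropy (fun ω => (X ω, jointObs Y S ω))
        = μ.entropy (fun ω => (jointObs Y S ω, X ω)) := by
      have hinj : Function.Injective
          (fun p : ((i : S) → 𝒪 i.1) × α => (p.2, p.1)) := by
        intro a b hab
        simp only [Prod.mk.injEq] at hab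
        exact Prod.ext hab.2 hab.1
      simpa using μ.entropy_comp_injective (fun ω => (jointObs Y S ω, X ω)) hinj
    unfold DiscProb.condMutualInfo
    rw [r1, r2, hE]
    ring
  have hmono := μ.condEntropy_comp_le (Y j) (jointObs Y B)
      (fun (c : (i : B) → 𝒪 i.1) (i : A) => c ⟨i.1, hAB i.2⟩)
  have hmono' : μ.entropy (fun ω => (Y j ω, jointObs Y B ω)) - μ.entropy (jointObs Y B)
      ≤ μ.entropy (fun ω => (Y j ω, jointObs Y A ω)) - μ.entropy (jointObs Y A) := hmono
  rw [main B hj, main A (fun h => hj (hAB h))]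
  linarith
end

section
/- If Y_1,...,Y_N are mutually conditionally independent given X, then for any subsets A, B ⊆ {1,...,N}, I(X; Y_A) + I(X; Y_B) ≥ I(X; Y_{A∪B}) + I(X; Y_{A∩B}). -/
open Finset

variable {Ω α : Type} [Fintype Ω] [Fintype α] [DecidableEq α]
  {N : ℕ} {𝒪 : Fin N → Type} [∀ i, Fintype (𝒪 i)] [∀ i, DecidableEq (𝒪 i)]


namespace DiscProb

variable {Ω : Type} [Fintype Ω]

variable (μ : DiscProb Ω) {β γ δ : Type} [DecidableEq β] [DecidableEq γ] [DecidableEq δ]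

lemma prob_nonneg_s3 (f : Ω → β) (b : β) : 0 ≤ μ.prob f b :=
  Finset.sum_nonneg fun ω _ => μ.nonneg ω

lemma prob_congr_s3 (f : Ω → β) (f' : Ω → γ) (b : β) (c : γ)
    (h : ∀ ω, f ω = b ↔ f' ω = c) : μ.prob f b = μ.prob f' c := by
  unfold prob
  apply Finset.sum_congr _ (fun _ _ => rfl)
  ext ω; simp [h ω]

lemma prob_le_comp (f : Ω → β) (g : β → γ) (b : β) :
    μ.prob f b ≤ μ.prob (fun ω => g (f ω)) (g b) := by
  unfold prob
  apply Finset.sum_le_sum_of_subset_of_nonneg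
  · intro ω hω
    simp only [mem_filter, mem_univ, true_and] at hω ⊢
    rw [hω]
  · intro ω _ _; exact μ.nonneg ω

lemma prob_comp_inj (f : Ω → β) (g : β → γ) (hg : Function.Injective g) (b : β) :
    μ.prob (fun ω => g (f ω)) (g b) = μ.prob f b :=
  μ.prob_congr_s3 _ f (g b) b (fun ω => hg.eq_iff)

lemma prob_map [Fintype β] (f : Ω → β) (f' : Ω → δ) (h : β → δ) (hh : ∀ ω, h (f ω) = f' ω) (d : δ) :
    μ.prob f' d = ∑ b ∈ Finset.univ.filter (fun b => h b = d), μ.prob f b := by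
  have e1 : ∀ b ∈ Finset.univ.filter (fun b => h b = d),
      (∑ ω ∈ (Finset.univ.filter (fun ω => f' ω = d)).filter (fun ω => f ω = b), μ.w ω)
        = μ.prob f b := by
    intro b hb
    simp only [mem_filter, mem_univ, true_and] at hb
    have hfe : (Finset.univ.filter (fun ω => f' ω = d)).filter (fun ω => f ω = b)
        = Finset.univ.filter (fun ω => f ω = b) := by
      ext ω
      simp only [mem_filter, mem_univ, true_and, and_iff_right_iff_imp]
      intro hfb; rw [← hh, hfb, hb]
    rw [hfe]; rfl
  have e2 : ∀ b ∈ (Finset.univ : Finset β), b ∉ Finset.univ.filter (fun b => h b = d) →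
      (∑ ω ∈ (Finset.univ.filter (fun ω => f' ω = d)).filter (fun ω => f ω = b), μ.w ω) = 0 := by
    intro b _ hb
    simp only [mem_filter, mem_univ, true_and] at hb
    have hfe : (Finset.univ.filter (fun ω => f' ω = d)).filter (fun ω => f ω = b) = ∅ := by
      ext ω
      simp only [mem_filter, mem_univ, true_and, Finset.notMem_empty, iff_false, not_and]
      intro h1 h2
      exact hb (by rw [← h2, hh, h1])
    rw [hfe, Finset.sum_empty]
  calc μ.prob f' d = ∑ ω ∈ Finset.univ.filter (fun ω => f' ω = d), μ.w ω := rfl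
    _ = ∑ b : β, ∑ ω ∈ (Finset.univ.filter (fun ω => f' ω = d)).filter (fun ω => f ω = b), μ.w ω :=
        (Finset.sum_fiberwise _ _ _).symm
    _ = ∑ b ∈ Finset.univ.filter (fun b => h b = d),
          ∑ ω ∈ (Finset.univ.filter (fun ω => f' ω = d)).filter (fun ω => f ω = b), μ.w ω :=
        (Finset.sum_subset (Finset.filter_subset _ _) e2).symm
    _ = ∑ b ∈ Finset.univ.filter (fun b => h b = d), μ.prob f b := Finset.sum_congr rfl e1

lemma sum_prob_comp [Fintype β] [Fintype δ] (f : Ω → β) (f' : Ω → δ) (h : β → δ)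
    (hh : ∀ ω, h (f ω) = f' ω) (φ : δ → ℝ) :
    ∑ b : β, μ.prob f b * φ (h b) = ∑ d : δ, μ.prob f' d * φ d := by
  have e : ∀ d : δ, μ.prob f' d * φ d
      = ∑ b ∈ Finset.univ.filter (fun b => h b = d), μ.prob f b * φ (h b) := by
    intro d
    rw [μ.prob_map f f' h hh d, Finset.sum_mul]
    apply Finset.sum_congr rfl
    intro b hb
    simp only [mem_filter, mem_univ, true_and] at hb
    rw [hb]
  calc ∑ b : β, μ.prob f b * φ (h b)
      = ∑ d : δ, ∑ b ∈ Finset.univ.filter (fun b => h b = d), (μ.prob f b * φ (h b)) :=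
        (Finset.sum_fiberwise _ _ _).symm
    _ = ∑ d : δ, μ.prob f' d * φ d := Finset.sum_congr rfl (fun d _ => (e d).symm)

lemma sum_prob_s3 [Fintype β] (f : Ω → β) : ∑ b : β, μ.prob f b = 1 := by
  have h := μ.sum_prob_comp (δ := Unit) f (fun _ => ()) (fun _ => ()) (fun _ => rfl) (fun _ => 1)
  simp only [mul_one] at h
  rw [h]
  unfold prob
  simp [μ.sum_one]

lemma sum_prob_pair_left [Fintype β] [Fintype γ] (f : Ω → β) (g : Ω → γ) (c : γ) :
    ∑ b : β, μ.prob (fun ω => (f ω, g ω)) (b, c) = μ.prob g c := by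
  rw [μ.prob_map (fun ω => (f ω, g ω)) g Prod.snd (fun ω => rfl) c,
      Finset.sum_filter, Fintype.sum_prod_type]
  apply Finset.sum_congr rfl
  intro b _
  simp

lemma entropy_comp_inj [Fintype β] [Fintype γ] (f : Ω → β) (g : β → γ)
    (hg : Function.Injective g) :
    μ.entropy (fun ω => g (f ω)) = μ.entropy f := by
  unfold entropy
  congr 1
  rw [← μ.sum_prob_comp f (fun ω => g (f ω)) g (fun _ => rfl)
      (fun c => Real.log (μ.prob (fun ω => g (f ω)) c))]
  apply Finset.sum_congr rfl
  intro b _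
  rw [μ.prob_comp_inj f g hg b]

lemma key_ineq (a b c d : ℝ) (ha : 0 ≤ a) (hab : a ≤ b) (had : a ≤ d) (hbc : b ≤ c) :
    a - b * d / c ≤ a * Real.log a + a * Real.log c - a * Real.log b - a * Real.log d := by
  rcases eq_or_lt_of_le ha with h0 | hapos
  · rw [← h0]
    have hb : (0:ℝ) ≤ b := h0 ▸ hab
    have hd : (0:ℝ) ≤ d := h0 ▸ had
    have hc : (0:ℝ) ≤ c := le_trans hb hbc
    have : 0 ≤ b * d / c := div_nonneg (mul_nonneg hb hd) hc
    simp only [zero_mul, zero_sub, add_zero, sub_zero, zero_add, neg_nonpos]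
    linarith
  · have hb : 0 < b := lt_of_lt_of_le hapos hab
    have hd : 0 < d := lt_of_lt_of_le hapos had
    have hc : 0 < c := lt_of_lt_of_le hb hbc
    have h1 : Real.log (b * d / (a * c)) ≤ b * d / (a * c) - 1 :=
      Real.log_le_sub_one_of_pos (by positivity)
    have h2 : Real.log (b * d / (a * c)) = Real.log b + Real.log d - Real.log a - Real.log c := by
      rw [Real.log_div (by positivity) (by positivity), Real.log_mul hb.ne' hd.ne',
        Real.log_mul hapos.ne' hc.ne']
      ring
    have h4 : a * (Real.log b + Real.log d - Real.log a - Real.log c)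
        ≤ a * (b * d / (a * c) - 1) := by
      apply mul_le_mul_of_nonneg_left _ ha
      rw [← h2]; exact h1
    have h5 : a * (b * d / (a * c) - 1) = b * d / c - a := by
      field_simp
    have h6 : a * Real.log a + a * Real.log c - a * Real.log b - a * Real.log d
        = -(a * (Real.log b + Real.log d - Real.log a - Real.log c)) := by ring
    rw [h6]
    linarith [h5 ▸ h4]

lemma entropy_submodular [Fintype β] [Fintype γ] [Fintype δ]
    (U : Ω → β) (V : Ω → γ) (W : Ω → δ) :
    μ.entropy (fun ω => (U ω, V ω, W ω)) + μ.entropy W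
      ≤ μ.entropy (fun ω => (U ω, W ω)) + μ.entropy (fun ω => (V ω, W ω)) := by
  classical
  set T : Ω → β × γ × δ := fun ω => (U ω, V ω, W ω) with hT
  set P : β × γ × δ → ℝ := μ.prob T with hP
  set pUW : β × δ → ℝ := μ.prob (fun ω => (U ω, W ω)) with hpUW
  set pVW : γ × δ → ℝ := μ.prob (fun ω => (V ω, W ω)) with hpVW
  set pW : δ → ℝ := μ.prob W with hpW
  have eUW : ∑ t : β × γ × δ, P t * Real.log (pUW (t.1, t.2.2))
      = ∑ s : β × δ, pUW s * Real.log (pUW s) :=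
    μ.sum_prob_comp T (fun ω => (U ω, W ω)) (fun t => (t.1, t.2.2)) (fun ω => rfl) (fun s => Real.log (pUW s))
  have eVW : ∑ t : β × γ × δ, P t * Real.log (pVW t.2)
      = ∑ s : γ × δ, pVW s * Real.log (pVW s) :=
    μ.sum_prob_comp T (fun ω => (V ω, W ω)) (fun t => t.2) (fun ω => rfl) (fun s => Real.log (pVW s))
  have eW : ∑ t : β × γ × δ, P t * Real.log (pW t.2.2)
      = ∑ s : δ, pW s * Real.log (pW s) :=
    μ.sum_prob_comp T W (fun t => t.2.2) (fun ω => rfl) (fun s => Real.log (pW s))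
  have hmargUW : ∀ w : δ, ∑ u : β, pUW (u, w) = pW w := fun w =>
    μ.sum_prob_pair_left U W w
  have hmargVW : ∀ w : δ, ∑ v : γ, pVW (v, w) = pW w := fun w =>
    μ.sum_prob_pair_left V W w
  have hstep : ∀ t : β × γ × δ,
      P t - pUW (t.1, t.2.2) * pVW t.2 / pW t.2.2
        ≤ P t * Real.log (P t) + P t * Real.log (pW t.2.2)
          - P t * Real.log (pUW (t.1, t.2.2)) - P t * Real.log (pVW t.2) := by
    rintro ⟨u, v, w⟩
    have h1 : P (u, v, w) ≤ pUW (u, w) := μ.prob_le_comp T (fun t => (t.1, t.2.2)) (u, v, w)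
    have h2 : P (u, v, w) ≤ pVW (v, w) := μ.prob_le_comp T (fun t => t.2) (u, v, w)
    have h3 : pUW (u, w) ≤ pW w := μ.prob_le_comp (fun ω => (U ω, W ω)) Prod.snd (u, w)
    exact key_ineq _ _ _ _ (μ.prob_nonneg_s3 T (u, v, w)) h1 h2 h3
  have hsum1 : ∑ t : β × γ × δ, P t = 1 := μ.sum_prob_s3 T
  have hsum2 : ∑ t : β × γ × δ, pUW (t.1, t.2.2) * pVW t.2 / pW t.2.2 ≤ 1 := by
    rw [Fintype.sum_prod_type]
    have inner : ∀ u : β, (∑ s : γ × δ, pUW (u, s.2) * pVW s / pW s.2)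
        = ∑ w : δ, pUW (u, w) * (pW w / pW w) := by
      intro u
      rw [Fintype.sum_prod_type, Finset.sum_comm]
      apply Finset.sum_congr rfl
      intro w _
      show ∑ v : γ, pUW (u, w) * pVW (v, w) / pW w = pUW (u, w) * (pW w / pW w)
      rw [← Finset.sum_div, ← Finset.mul_sum, hmargVW w, mul_div_assoc]
    rw [Finset.sum_congr rfl (fun u _ => inner u), Finset.sum_comm]
    have hw : ∀ w : δ, (∑ u : β, pUW (u, w) * (pW w / pW w)) ≤ pW w := by
      intro w
      rw [← Finset.sum_mul, hmargUW w]
      rcases eq_or_ne (pW w) 0 with h | h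
      · rw [h]; simp
      · rw [div_self h, mul_one]
    calc ∑ w : δ, ∑ u : β, pUW (u, w) * (pW w / pW w)
        ≤ ∑ w : δ, pW w := Finset.sum_le_sum (fun w _ => hw w)
      _ = 1 := μ.sum_prob_s3 W
  have main : (0:ℝ) ≤ ∑ t : β × γ × δ,
      (P t * Real.log (P t) + P t * Real.log (pW t.2.2)
        - P t * Real.log (pUW (t.1, t.2.2)) - P t * Real.log (pVW t.2)) := by
    calc (0:ℝ) = 1 - 1 := by ring
      _ ≤ (∑ t : β × γ × δ, P t) - ∑ t : β × γ × δ, pUW (t.1, t.2.2) * pVW t.2 / pW t.2.2 := by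
          rw [hsum1]; linarith
      _ = ∑ t : β × γ × δ, (P t - pUW (t.1, t.2.2) * pVW t.2 / pW t.2.2) := by
          rw [Finset.sum_sub_distrib]
      _ ≤ _ := Finset.sum_le_sum (fun t _ => hstep t)
  have expand : ∑ t : β × γ × δ,
      (P t * Real.log (P t) + P t * Real.log (pW t.2.2)
        - P t * Real.log (pUW (t.1, t.2.2)) - P t * Real.log (pVW t.2))
      = (∑ t : β × γ × δ, P t * Real.log (P t)) + (∑ t : β × γ × δ, P t * Real.log (pW t.2.2))
        - (∑ t : β × γ × δ, P t * Real.log (pUW (t.1, t.2.2)))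
        - (∑ t : β × γ × δ, P t * Real.log (pVW t.2)) := by
    rw [Finset.sum_sub_distrib, Finset.sum_sub_distrib, Finset.sum_add_distrib]
  rw [expand, eUW, eVW, eW] at main
  unfold entropy
  linarith [main]

end DiscProb

section AuxCI
variable {Ω α : Type} [Fintype Ω] [Fintype α] [DecidableEq α]
  {N : ℕ} {𝒪 : Fin N → Type} [∀ i, Fintype (𝒪 i)] [∀ i, DecidableEq (𝒪 i)]

lemma entropy_jointObs_CI (μ : DiscProb Ω) (X : Ω → α) (Y : ∀ i, Ω → 𝒪 i)
    (hCI : iCondIndepGiven μ X Y) (S : Finset (Fin N)) :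
    μ.entropy (fun ω => (jointObs Y S ω, X ω))
      = (1 - (S.card : ℝ)) * μ.entropy X
        + ∑ i ∈ S, μ.entropy (fun ω => (Y i ω, X ω)) := by
  classical
  set J := jointObs Y S with hJ
  set q := μ.prob (fun ω => (J ω, X ω)) with hq
  set p := μ.prob X with hp
  have key : ∀ z : ((i : S) → 𝒪 i.1) × α,
      q z * Real.log (q z)
        = q z * ((1 - (S.card : ℝ)) * Real.log (p z.2)
            + ∑ i : S, Real.log (μ.prob (fun ω => (Y i.1 ω, X ω)) (z.1 i, z.2))) := by
    rintro ⟨y, x⟩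
    rcases eq_or_lt_of_le (μ.prob_nonneg_s3 (fun ω => (J ω, X ω)) (y, x)) with h0 | hq0
    · have h0' : q (y, x) = 0 := h0.symm
      rw [h0', zero_mul, zero_mul]
    · have hpx : 0 < p x :=
        lt_of_lt_of_le hq0 (μ.prob_le_comp (fun ω => (J ω, X ω)) Prod.snd (y, x))
      have hr : ∀ i : S, 0 < μ.prob (fun ω => (Y i.1 ω, X ω)) (y i, x) := fun i =>
        lt_of_lt_of_le hq0 (μ.prob_le_comp (fun ω => (J ω, X ω)) (fun z => (z.1 i, z.2)) (y, x))
      have hci := hCI S y x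
      have h1 := congrArg Real.log hci
      rw [Real.log_mul (ne_of_gt hq0) (pow_ne_zero _ (ne_of_gt hpx)), Real.log_pow,
          Real.log_mul (ne_of_gt hpx)
            (Finset.prod_ne_zero_iff.mpr (fun i _ => ne_of_gt (hr i))),
          Real.log_prod (fun i _ => ne_of_gt (hr i))] at h1
      have hlog : Real.log (q (y, x))
          = (1 - (S.card : ℝ)) * Real.log (p x)
            + ∑ i : S, Real.log (μ.prob (fun ω => (Y i.1 ω, X ω)) (y i, x)) := by
        push_cast at h1
        linarith [h1]
      show q (y, x) * Real.log (q (y, x)) = q (y, x) * _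
      rw [hlog]
  have e3 : ∀ z : ((i : S) → 𝒪 i.1) × α,
      q z * ((1 - (S.card : ℝ)) * Real.log (p z.2)
          + ∑ i : S, Real.log (μ.prob (fun ω => (Y i.1 ω, X ω)) (z.1 i, z.2)))
        = (1 - (S.card : ℝ)) * (q z * Real.log (p z.2))
          + ∑ i : S, q z * Real.log (μ.prob (fun ω => (Y i.1 ω, X ω)) (z.1 i, z.2)) := by
    intro z
    rw [mul_add, Finset.mul_sum]
    ring
  have e4 : ∑ z : ((i : S) → 𝒪 i.1) × α, q z * Real.log (p z.2)
      = ∑ x : α, p x * Real.log (p x) :=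
    μ.sum_prob_comp (fun ω => (J ω, X ω)) X Prod.snd (fun ω => rfl)
      (fun x => Real.log (p x))
  have e5 : ∀ i : S, ∑ z : ((i : S) → 𝒪 i.1) × α,
      q z * Real.log (μ.prob (fun ω => (Y i.1 ω, X ω)) (z.1 i, z.2))
      = ∑ s : 𝒪 i.1 × α, μ.prob (fun ω => (Y i.1 ω, X ω)) s
          * Real.log (μ.prob (fun ω => (Y i.1 ω, X ω)) s) := fun i =>
    μ.sum_prob_comp (fun ω => (J ω, X ω)) (fun ω => (Y i.1 ω, X ω))
      (fun z => (z.1 i, z.2)) (fun ω => rfl)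
      (fun s => Real.log (μ.prob (fun ω => (Y i.1 ω, X ω)) s))
  have lhs : μ.entropy (fun ω => (J ω, X ω))
      = -((1 - (S.card : ℝ)) * ∑ x : α, p x * Real.log (p x))
        - ∑ i : S, ∑ s : 𝒪 i.1 × α, μ.prob (fun ω => (Y i.1 ω, X ω)) s
            * Real.log (μ.prob (fun ω => (Y i.1 ω, X ω)) s) := by
    show -∑ z : ((i : S) → 𝒪 i.1) × α, q z * Real.log (q z) = _
    rw [Finset.sum_congr rfl (fun z _ => key z), Finset.sum_congr rfl (fun z _ => e3 z),
        Finset.sum_add_distrib, ← Finset.mul_sum, e4, Finset.sum_comm]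
    rw [Finset.sum_congr rfl (fun i _ => e5 i)]
    ring
  rw [lhs]
  rw [← Finset.sum_coe_sort S (fun i => μ.entropy (fun ω => (Y i ω, X ω)))]
  unfold DiscProb.entropy
  rw [Finset.sum_neg_distrib]
  ring


lemma entropy_jointObs_pair (μ : DiscProb Ω) (Y : ∀ i, Ω → 𝒪 i)
    {S T R : Finset (Fin N)} (hS : S ⊆ R) (hT : T ⊆ R) (hR : R ⊆ S ∪ T) :
    μ.entropy (fun ω => (jointObs Y S ω, jointObs Y T ω)) = μ.entropy (jointObs Y R) := by
  have hg : Function.Injective (fun (y : (i : R) → 𝒪 i.1) =>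
      ((fun i : S => y ⟨i.1, hS i.2⟩, fun i : T => y ⟨i.1, hT i.2⟩))) := by
    intro y y' hyy
    funext i
    have h1 := congrArg Prod.fst hyy
    have h2 := congrArg Prod.snd hyy
    simp only at h1 h2
    rcases Finset.mem_union.mp (hR i.2) with hi | hi
    · have := congrFun h1 ⟨i.1, hi⟩
      simp only [Subtype.coe_eta] at this
      exact this
    · have := congrFun h2 ⟨i.1, hi⟩
      simp only [Subtype.coe_eta] at this
      exact this
  exact μ.entropy_comp_inj (jointObs Y R)
    (fun y => (fun i : S => y ⟨i.1, hS i.2⟩, fun i : T => y ⟨i.1, hT i.2⟩)) hg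

lemma entropy_jointObs_triple (μ : DiscProb Ω) (Y : ∀ i, Ω → 𝒪 i)
    {S T P R : Finset (Fin N)} (hS : S ⊆ R) (hT : T ⊆ R) (hP : P ⊆ R)
    (hR : R ⊆ S ∪ T ∪ P) :
    μ.entropy (fun ω => (jointObs Y S ω, jointObs Y T ω, jointObs Y P ω))
      = μ.entropy (jointObs Y R) := by
  have hg : Function.Injective (fun (y : (i : R) → 𝒪 i.1) =>
      ((fun i : S => y ⟨i.1, hS i.2⟩,
        fun i : T => y ⟨i.1, hT i.2⟩,
        fun i : P => y ⟨i.1, hP i.2⟩))) := by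
    intro y y' hyy
    funext i
    have h1 := congrArg Prod.fst hyy
    have h2 := congrArg (fun z => z.2.1) hyy
    have h3 := congrArg (fun z => z.2.2) hyy
    simp only at h1 h2 h3
    rcases Finset.mem_union.mp (hR i.2) with hi' | hi
    · rcases Finset.mem_union.mp hi' with hi | hi
      · have := congrFun h1 ⟨i.1, hi⟩
        simp only [Subtype.coe_eta] at this
        exact this
      · have := congrFun h2 ⟨i.1, hi⟩
        simp only [Subtype.coe_eta] at this
        exact this
    · have := congrFun h3 ⟨i.1, hi⟩
      simp only [Subtype.coe_eta] at this
      exact this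
  exact μ.entropy_comp_inj (jointObs Y R)
    (fun y => (fun i : S => y ⟨i.1, hS i.2⟩,
        fun i : T => y ⟨i.1, hT i.2⟩,
        fun i : P => y ⟨i.1, hP i.2⟩)) hg

end AuxCI

/-- under mutual conditional independence of the `Y_i` given `X`,
`I(X ; Y_A) + I(X ; Y_B) ≥ I(X ; Y_{A ∪ B}) + I(X ; Y_{A ∩ B})`. -/
theorem mutualInfo_submodular_lattice
    (μ : DiscProb Ω) (X : Ω → α) (Y : ∀ i, Ω → 𝒪 i)
    (hCI : iCondIndepGiven μ X Y) (A B : Finset (Fin N)) :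
    μ.mutualInfo X (jointObs Y (A ∪ B)) + μ.mutualInfo X (jointObs Y (A ∩ B))
      ≤ μ.mutualInfo X (jointObs Y A) + μ.mutualInfo X (jointObs Y B) := by
  classical
  -- entropy submodularity for the joint observations
  have hun : μ.entropy (jointObs Y (A ∪ B)) + μ.entropy (jointObs Y (A ∩ B))
      ≤ μ.entropy (jointObs Y A) + μ.entropy (jointObs Y B) := by
    have hsub := μ.entropy_submodular (jointObs Y (A \ B)) (jointObs Y (B \ A))
      (jointObs Y (A ∩ B))
    have e1 : μ.entropy (fun ω => (jointObs Y (A \ B) ω, jointObs Y (B \ A) ω,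
        jointObs Y (A ∩ B) ω)) = μ.entropy (jointObs Y (A ∪ B)) := by
      apply entropy_jointObs_triple μ Y
      · exact Finset.sdiff_subset.trans Finset.subset_union_left
      · exact Finset.sdiff_subset.trans Finset.subset_union_right
      · exact Finset.inter_subset_left.trans Finset.subset_union_left
      · intro i hi
        simp only [Finset.mem_union, Finset.mem_sdiff, Finset.mem_inter] at hi ⊢
        tauto
    have e2 : μ.entropy (fun ω => (jointObs Y (A \ B) ω, jointObs Y (A ∩ B) ω))
        = μ.entropy (jointObs Y A) := by
      apply entropy_jointObs_pair μ Y
      · exact Finset.sdiff_subset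
      · exact Finset.inter_subset_left
      · intro i hi
        simp only [Finset.mem_union, Finset.mem_sdiff, Finset.mem_inter]
        tauto
    have e3 : μ.entropy (fun ω => (jointObs Y (B \ A) ω, jointObs Y (A ∩ B) ω))
        = μ.entropy (jointObs Y B) := by
      apply entropy_jointObs_pair μ Y
      · exact Finset.sdiff_subset
      · exact Finset.inter_subset_right
      · intro i hi
        simp only [Finset.mem_union, Finset.mem_sdiff, Finset.mem_inter]
        tauto
    rw [e1, e2, e3] at hsub
    exact hsub
  have hswap : ∀ S : Finset (Fin N),
      μ.entropy (fun ω => (X ω, jointObs Y S ω))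
        = μ.entropy (fun ω => (jointObs Y S ω, X ω)) := fun S =>
    μ.entropy_comp_inj (fun ω => (jointObs Y S ω, X ω)) Prod.swap Prod.swap_injective
  have hCIun := entropy_jointObs_CI μ X Y hCI (A ∪ B)
  have hCIin := entropy_jointObs_CI μ X Y hCI (A ∩ B)
  have hCIA := entropy_jointObs_CI μ X Y hCI A
  have hCIB := entropy_jointObs_CI μ X Y hCI B
  have hcard : ((A ∪ B).card : ℝ) + ((A ∩ B).card : ℝ) = (A.card : ℝ) + (B.card : ℝ) := by
    exact_mod_cast Finset.card_union_add_card_inter A B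
  have hse : (∑ i ∈ A ∪ B, μ.entropy (fun ω => (Y i ω, X ω)))
      + (∑ i ∈ A ∩ B, μ.entropy (fun ω => (Y i ω, X ω)))
      = (∑ i ∈ A, μ.entropy (fun ω => (Y i ω, X ω)))
        + (∑ i ∈ B, μ.entropy (fun ω => (Y i ω, X ω))) :=
    Finset.sum_union_inter
  have hmul : (1 - ((A ∪ B).card : ℝ)) * μ.entropy X + (1 - ((A ∩ B).card : ℝ)) * μ.entropy X
      = (1 - (A.card : ℝ)) * μ.entropy X + (1 - (B.card : ℝ)) * μ.entropy X := by
    have h : (1 - ((A ∪ B).card : ℝ)) + (1 - ((A ∩ B).card : ℝ))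
        = (1 - (A.card : ℝ)) + (1 - (B.card : ℝ)) := by linarith
    calc (1 - ((A ∪ B).card : ℝ)) * μ.entropy X + (1 - ((A ∩ B).card : ℝ)) * μ.entropy X
        = ((1 - ((A ∪ B).card : ℝ)) + (1 - ((A ∩ B).card : ℝ))) * μ.entropy X := by ring
      _ = ((1 - (A.card : ℝ)) + (1 - (B.card : ℝ))) * μ.entropy X := by rw [h]
      _ = _ := by ring
  unfold DiscProb.mutualInfo
  rw [hswap, hswap, hswap, hswap, hCIun, hCIin, hCIA, hCIB]
  linarith [hun, hse, hmul]
end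

section
/- Let Z = f(X) be a deterministic function of X, and let Y_1,...,Y_N be mutually conditionally independent given X. Then the set function A ↦ I(X; Y_A | Z) is submodular on subsets of {1,...,N}. -/
open Finset

namespace DiscProb

variable {Ω : Type} [Fintype Ω]

variable (μ : DiscProb Ω)

lemma prob_nonneg_s5 {α} [DecidableEq α] (X : Ω → α) (a : α) : 0 ≤ μ.prob X a :=
  Finset.sum_nonneg fun ω _ => μ.nonneg ω

lemma w_le_prob {α} [DecidableEq α] (X : Ω → α) (ω : Ω) : μ.w ω ≤ μ.prob X (X ω) :=
  Finset.single_le_sum (f := μ.w) (fun ω' _ => μ.nonneg ω') (by simp)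

lemma sum_prob_mul {α} [Fintype α] [DecidableEq α] (X : Ω → α) (F : α → ℝ) :
    ∑ a, μ.prob X a * F a = ∑ ω, μ.w ω * F (X ω) := by
  rw [← Finset.sum_fiberwise (s := Finset.univ) (g := X) (f := fun ω => μ.w ω * F (X ω))]
  refine Finset.sum_congr rfl fun a _ => ?_
  rw [prob, Finset.sum_mul]
  refine Finset.sum_congr rfl fun ω hω => ?_
  simp only [Finset.mem_filter] at hω
  rw [hω.2]

lemma entropy_eq {α} [Fintype α] [DecidableEq α] (X : Ω → α) :
    μ.entropy X = -∑ ω, μ.w ω * Real.log (μ.prob X (X ω)) := by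
  rw [entropy, sum_prob_mul]

lemma sum_prob_s5 {α} [Fintype α] [DecidableEq α] (X : Ω → α) : ∑ a, μ.prob X a = 1 := by
  have := μ.sum_prob_mul X (fun _ => 1)
  simpa [μ.sum_one] using this

lemma prob_comp_s5 {α β} [DecidableEq α] [DecidableEq β] {g : α → β}
    (hg : Function.Injective g) (X : Ω → α) (a : α) :
    μ.prob (fun ω => g (X ω)) (g a) = μ.prob X a := by
  rw [prob, prob]
  congr 1
  ext ω
  simp [hg.eq_iff]

lemma entropy_comp {α β} [Fintype α] [DecidableEq α] [Fintype β] [DecidableEq β]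
    {g : α → β} (hg : Function.Injective g) (X : Ω → α) :
    μ.entropy (fun ω => g (X ω)) = μ.entropy X := by
  rw [entropy_eq, entropy_eq]
  congr 1
  exact Finset.sum_congr rfl fun ω _ => by rw [prob_comp_s5 μ hg]

lemma prob_eq_sum_ite {α} [DecidableEq α] (X : Ω → α) (a : α) :
    μ.prob X a = ∑ ω, if X ω = a then μ.w ω else 0 := by
  rw [prob, Finset.sum_filter]

lemma prob_fst_marg {α β} [Fintype α] [DecidableEq α] [DecidableEq β]
    (U : Ω → α) (V : Ω → β) (b : β) :
    ∑ a, μ.prob (fun ω => (U ω, V ω)) (a, b) = μ.prob V b := by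
  simp only [prob_eq_sum_ite, Prod.mk.injEq]
  rw [Finset.sum_comm]
  refine Finset.sum_congr rfl fun ω _ => ?_
  by_cases h : V ω = b <;> simp [h]

lemma prob_pair_le_snd {α β} [DecidableEq α] [DecidableEq β] (U : Ω → α) (V : Ω → β)
    (a : α) (b : β) :
    μ.prob (fun ω => (U ω, V ω)) (a, b) ≤ μ.prob V b := by
  rw [prob, prob]
  refine Finset.sum_le_sum_of_subset_of_nonneg ?_ fun ω _ _ => μ.nonneg ω
  intro ω hω
  simp only [Finset.mem_filter, Prod.mk.injEq] at hω ⊢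
  exact ⟨hω.1, hω.2.2⟩


lemma ssa {α β γ : Type} [Fintype α] [DecidableEq α] [Fintype β] [DecidableEq β]
    [Fintype γ] [DecidableEq γ] (U : Ω → α) (W : Ω → β) (V : Ω → γ) :
    μ.entropy (fun ω => (U ω, W ω, V ω)) + μ.entropy V
      ≤ μ.entropy (fun ω => (U ω, V ω)) + μ.entropy (fun ω => (W ω, V ω)) := by
  set T : α → β → γ → ℝ := fun u w v => μ.prob (fun ω => (U ω, W ω, V ω)) (u, w, v) with hTdef
  set P : α → γ → ℝ := fun u v => μ.prob (fun ω => (U ω, V ω)) (u, v) with hPdef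
  set Q : β → γ → ℝ := fun w v => μ.prob (fun ω => (W ω, V ω)) (w, v) with hQdef
  set R : γ → ℝ := fun v => μ.prob V v with hRdef
  have hT0 : ∀ u w v, 0 ≤ T u w v := fun u w v => μ.prob_nonneg_s5 _ _
  have hP0 : ∀ u v, 0 ≤ P u v := fun u v => μ.prob_nonneg_s5 _ _
  have hQ0 : ∀ w v, 0 ≤ Q w v := fun w v => μ.prob_nonneg_s5 _ _
  have hR0 : ∀ v, 0 ≤ R v := fun v => μ.prob_nonneg_s5 _ _
  -- marginals
  have mQT : ∀ w v, (∑ u, T u w v) = Q w v := fun w v =>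
    μ.prob_fst_marg U (fun ω => (W ω, V ω)) (w, v)
  have mPT : ∀ u v, (∑ w, T u w v) = P u v := by
    intro u v
    have h := μ.prob_fst_marg W (fun ω => (U ω, V ω)) (u, v)
    show _ = μ.prob (fun ω => (U ω, V ω)) (u, v)
    rw [← h]
    refine Finset.sum_congr rfl fun w _ => ?_
    simp only [hTdef]
    exact μ.prob_comp_s5 (g := fun x : β × α × γ => (x.2.1, x.1, x.2.2))
      (fun x y h => by
        simp only [Prod.mk.injEq] at h
        exact Prod.ext h.2.1 (Prod.ext h.1 h.2.2))
      (fun ω => (W ω, U ω, V ω)) (w, u, v)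
  have mPR : ∀ v, (∑ u, P u v) = R v := fun v => μ.prob_fst_marg U V v
  have mQR : ∀ v, (∑ w, Q w v) = R v := fun v => μ.prob_fst_marg W V v
  have hTP : ∀ u w v, T u w v ≤ P u v := by
    intro u w v
    rw [← mPT u v]
    exact Finset.single_le_sum (fun w' _ => hT0 u w' v) (Finset.mem_univ w)
  have hTQ : ∀ u w v, T u w v ≤ Q w v := by
    intro u w v
    rw [← mQT w v]
    exact Finset.single_le_sum (fun u' _ => hT0 u' w v) (Finset.mem_univ u)
  have hQR : ∀ w v, Q w v ≤ R v := fun w v => μ.prob_pair_le_snd W V w v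
  -- pointwise key inequality
  have key : ∀ u w v,
      T u w v * Real.log (P u v) + T u w v * Real.log (Q w v)
        - (T u w v * Real.log (T u w v) + T u w v * Real.log (R v))
      ≤ P u v * Q w v / R v - T u w v := by
    intro u w v
    rcases eq_or_lt_of_le (hT0 u w v) with h0 | hT
    · rw [← h0]
      simp only [zero_mul, add_zero, sub_zero, zero_add, sub_self, zero_sub, neg_zero]
      exact div_nonneg (mul_nonneg (hP0 u v) (hQ0 w v)) (hR0 v)
    · have hP : 0 < P u v := lt_of_lt_of_le hT (hTP u w v)
      have hQ : 0 < Q w v := lt_of_lt_of_le hT (hTQ u w v)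
      have hR : 0 < R v := lt_of_lt_of_le hQ (hQR w v)
      have hlog := Real.log_le_sub_one_of_pos
        (x := P u v * Q w v / (T u w v * R v)) (by positivity)
      rw [Real.log_div (by positivity) (by positivity), Real.log_mul hP.ne' hQ.ne',
        Real.log_mul hT.ne' hR.ne'] at hlog
      have hmul := mul_le_mul_of_nonneg_left hlog hT.le
      have hcancel : T u w v * (P u v * Q w v / (T u w v * R v) - 1)
          = P u v * Q w v / R v - T u w v := by
        field_simp
      nlinarith [hmul, hcancel]
  have sumkey : ∑ u, ∑ w, ∑ v,
      (T u w v * Real.log (P u v) + T u w v * Real.log (Q w v)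
        - (T u w v * Real.log (T u w v) + T u w v * Real.log (R v)))
      ≤ ∑ u, ∑ w, ∑ v, (P u v * Q w v / R v - T u w v) := by
    refine Finset.sum_le_sum fun u _ => Finset.sum_le_sum fun w _ =>
      Finset.sum_le_sum fun v _ => key u w v
  -- RHS of sumkey is 0
  have hPQsum : ∀ u v, ∑ w, P u v * Q w v / R v = P u v := by
    intro u v
    by_cases hR : R v = 0
    · have hPz : P u v = 0 :=
        le_antisymm (by rw [← hR]; exact μ.prob_pair_le_snd U V u v) (hP0 u v)
      simp [hPz]
    · have : ∑ w, P u v * Q w v / R v = (∑ w, Q w v) * (P u v / R v) := by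
        rw [Finset.sum_mul]
        exact Finset.sum_congr rfl fun w _ => by ring
      rw [this, mQR v]
      field_simp
  have hPsum : ∑ u, ∑ v, P u v = 1 := by
    have := μ.sum_prob_s5 (fun ω => (U ω, V ω))
    rwa [Fintype.sum_prod_type] at this
  have hTsum : ∑ u, ∑ w, ∑ v, T u w v = 1 := by
    have := μ.sum_prob_s5 (fun ω => (U ω, W ω, V ω))
    rwa [Fintype.sum_prod_type, Finset.sum_congr rfl
      (fun u _ => Fintype.sum_prod_type _)] at this
  have hRHS : ∑ u, ∑ w, ∑ v, (P u v * Q w v / R v - T u w v) = 0 := by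
    have h1 : ∑ u, ∑ w, ∑ v, P u v * Q w v / R v = 1 := by
      have : ∀ u, ∑ w, ∑ v, P u v * Q w v / R v = ∑ v, P u v := by
        intro u
        rw [Finset.sum_comm]
        exact Finset.sum_congr rfl fun v _ => hPQsum u v
      rw [Finset.sum_congr rfl fun u _ => this u, hPsum]
    simp only [Finset.sum_sub_distrib]
    rw [h1, hTsum]
    ring
  -- identities for entropies
  have I1 : ∑ u, ∑ w, ∑ v, T u w v * Real.log (P u v) = ∑ u, ∑ v, P u v * Real.log (P u v) := by
    refine Finset.sum_congr rfl fun u _ => ?_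
    rw [Finset.sum_comm]
    refine Finset.sum_congr rfl fun v _ => ?_
    rw [← Finset.sum_mul, mPT u v]
  have I2 : ∑ u, ∑ w, ∑ v, T u w v * Real.log (Q w v) = ∑ w, ∑ v, Q w v * Real.log (Q w v) := by
    rw [Finset.sum_comm]
    refine Finset.sum_congr rfl fun w _ => ?_
    rw [Finset.sum_comm]
    refine Finset.sum_congr rfl fun v _ => ?_
    rw [← Finset.sum_mul, mQT w v]
  have I3 : ∑ u, ∑ w, ∑ v, T u w v * Real.log (R v) = ∑ v, R v * Real.log (R v) := by
    have step : ∀ v, ∑ u, ∑ w, T u w v * Real.log (R v) = R v * Real.log (R v) := by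
      intro v
      have h1 : ∀ u, ∑ w, T u w v * Real.log (R v) = P u v * Real.log (R v) := fun u => by
        rw [← Finset.sum_mul, mPT]
      rw [Finset.sum_congr rfl fun u _ => h1 u, ← Finset.sum_mul, mPR]
    calc ∑ u, ∑ w, ∑ v, T u w v * Real.log (R v)
        = ∑ u, ∑ v, ∑ w, T u w v * Real.log (R v) :=
          Finset.sum_congr rfl fun u _ => Finset.sum_comm
      _ = ∑ v, ∑ u, ∑ w, T u w v * Real.log (R v) := Finset.sum_comm
      _ = ∑ v, R v * Real.log (R v) := Finset.sum_congr rfl fun v _ => step v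
  have E1 : μ.entropy (fun ω => (U ω, W ω, V ω))
      = -∑ u, ∑ w, ∑ v, T u w v * Real.log (T u w v) := by
    simp only [hTdef, entropy, Fintype.sum_prod_type]
  have E2 : μ.entropy (fun ω => (U ω, V ω))
      = -∑ u, ∑ v, P u v * Real.log (P u v) := by
    simp only [hPdef, entropy, Fintype.sum_prod_type]
  have E3 : μ.entropy (fun ω => (W ω, V ω))
      = -∑ w, ∑ v, Q w v * Real.log (Q w v) := by
    simp only [hQdef, entropy, Fintype.sum_prod_type]
  have E4 : μ.entropy V = -∑ v, R v * Real.log (R v) := by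
    simp only [hRdef, entropy]
  simp only [Finset.sum_sub_distrib, Finset.sum_add_distrib] at sumkey hRHS
  rw [E1, E2, E3, E4]
  linarith [sumkey, hRHS, I1, I2, I3]

end DiscProb

variable {Ω α : Type} [Fintype Ω] [Fintype α] [DecidableEq α]
  {N : ℕ} {𝒪 : Fin N → Type} [∀ i, Fintype (𝒪 i)] [∀ i, DecidableEq (𝒪 i)]


/-- Restriction of a joint observation to a subset of indices. -/
def res {S R : Finset (Fin N)} (h : S ⊆ R) (y : (i : R) → 𝒪 i.1) :
    (i : S) → 𝒪 i.1 := fun i => y ⟨i.1, h i.2⟩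

lemma res_injective2 {S T R : Finset (Fin N)} (hS : S ⊆ R) (hT : T ⊆ R)
    (hcov : ∀ i ∈ R, i ∈ S ∨ i ∈ T) {γ : Type} :
    Function.Injective (fun p : ((i : R) → 𝒪 i.1) × γ =>
      (res hS p.1, res hT p.1, p.2)) := by
  rintro ⟨y, z⟩ ⟨y', z'⟩ h
  simp only [Prod.mk.injEq] at h
  obtain ⟨h1, h2, h3⟩ := h
  refine Prod.ext ?_ h3
  funext i
  rcases hcov i.1 i.2 with hi | hi
  · exact congrFun h1 ⟨i.1, hi⟩
  · exact congrFun h2 ⟨i.1, hi⟩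

lemma res_injective3 {S T P R : Finset (Fin N)} (hS : S ⊆ R) (hT : T ⊆ R)
    (hP : P ⊆ R) (hcov : ∀ i ∈ R, i ∈ S ∨ i ∈ T ∨ i ∈ P) {γ : Type} :
    Function.Injective (fun p : ((i : R) → 𝒪 i.1) × γ =>
      (res hS p.1, res hT p.1, res hP p.1, p.2)) := by
  rintro ⟨y, z⟩ ⟨y', z'⟩ h
  simp only [Prod.mk.injEq] at h
  obtain ⟨h1, h2, h3, h4⟩ := h
  refine Prod.ext ?_ h4
  funext i
  rcases hcov i.1 i.2 with hi | hi | hi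
  · exact congrFun h1 ⟨i.1, hi⟩
  · exact congrFun h2 ⟨i.1, hi⟩
  · exact congrFun h3 ⟨i.1, hi⟩

/-- Chain rule for mutually conditionally independent variables:
`H(Y_S, X) + |S| ⬝ H(X) = H(X) + ∑ i ∈ S, H(Y_i, X)`. -/
lemma entropy_jointObs (μ : DiscProb Ω) (X : Ω → α) (Y : ∀ i, Ω → 𝒪 i)
    (hCI : iCondIndepGiven μ X Y) (S : Finset (Fin N)) :
    μ.entropy (fun ω => (jointObs Y S ω, X ω)) + (S.card : ℝ) * μ.entropy X
      = μ.entropy X + ∑ i ∈ S, μ.entropy (fun ω => (Y i ω, X ω)) := by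
  classical
  have main : ∀ ω : Ω,
      μ.w ω * Real.log (μ.prob (fun ω' => (jointObs Y S ω', X ω')) (jointObs Y S ω, X ω))
        + (S.card : ℝ) * (μ.w ω * Real.log (μ.prob X (X ω)))
      = μ.w ω * Real.log (μ.prob X (X ω))
        + ∑ i ∈ S, μ.w ω * Real.log (μ.prob (fun ω' => (Y i ω', X ω')) (Y i ω, X ω)) := by
    intro ω
    rcases eq_or_lt_of_le (μ.nonneg ω) with h0 | hw
    · rw [← h0]; simp
    · have hx : 0 < μ.prob X (X ω) := lt_of_lt_of_le hw (μ.w_le_prob X ω)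
      have hS : 0 < μ.prob (fun ω' => (jointObs Y S ω', X ω')) (jointObs Y S ω, X ω) :=
        lt_of_lt_of_le hw (μ.w_le_prob (fun ω' => (jointObs Y S ω', X ω')) ω)
      have hq : ∀ i : {x // x ∈ S},
          0 < μ.prob (fun ω' => (Y i.1 ω', X ω')) (Y i.1 ω, X ω) :=
        fun i => lt_of_lt_of_le hw (μ.w_le_prob (fun ω' => (Y i.1 ω', X ω')) ω)
      have hci : μ.prob (fun ω' => (jointObs Y S ω', X ω')) (jointObs Y S ω, X ω)
            * μ.prob X (X ω) ^ S.card
          = μ.prob X (X ω)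
            * ∏ i : {x // x ∈ S}, μ.prob (fun ω' => (Y i.1 ω', X ω')) (Y i.1 ω, X ω) :=
        hCI S (jointObs Y S ω) (X ω)
      have hlog := congrArg Real.log hci
      rw [Real.log_mul hS.ne' (pow_pos hx S.card).ne', Real.log_pow,
        Real.log_mul hx.ne' (Finset.prod_pos fun i _ => hq i).ne',
        Real.log_prod fun i _ => (hq i).ne'] at hlog
      have hconv : ∑ i ∈ S, μ.w ω * Real.log (μ.prob (fun ω' => (Y i ω', X ω')) (Y i ω, X ω))
          = μ.w ω * ∑ i : {x // x ∈ S},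
              Real.log (μ.prob (fun ω' => (Y i.1 ω', X ω')) (Y i.1 ω, X ω)) := by
        rw [Finset.mul_sum, ← Finset.sum_coe_sort S
          (fun i => μ.w ω * Real.log (μ.prob (fun ω' => (Y i ω', X ω')) (Y i ω, X ω)))]
      rw [hconv]
      linear_combination μ.w ω * hlog
  have hsum := Finset.sum_congr rfl fun ω (_ : ω ∈ (Finset.univ : Finset Ω)) => main ω
  rw [Finset.sum_add_distrib, Finset.sum_add_distrib, ← Finset.mul_sum,
    Finset.sum_comm] at hsum
  simp only [DiscProb.entropy_eq]
  rw [Finset.sum_neg_distrib]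
  linarith [hsum]

/-- for `Z = f(X)` and `Y_i` mutually conditionally independent given `X`,
the set function `A ↦ I(X ; Y_A | Z)` is submodular. -/
theorem condMutualInfo_given_secret_submodular {γ : Type} [Fintype γ] [DecidableEq γ]
    (μ : DiscProb Ω) (X : Ω → α) (f : α → γ) (Y : ∀ i, Ω → 𝒪 i)
    (hCI : iCondIndepGiven μ X Y) (A B : Finset (Fin N)) :
    μ.condMutualInfo X (jointObs Y (A ∪ B)) (fun ω => f (X ω))
        + μ.condMutualInfo X (jointObs Y (A ∩ B)) (fun ω => f (X ω))
      ≤ μ.condMutualInfo X (jointObs Y A) (fun ω => f (X ω))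
        + μ.condMutualInfo X (jointObs Y B) (fun ω => f (X ω)) := by
  classical
  simp only [DiscProb.condMutualInfo]
  have e2 : ∀ S : Finset (Fin N),
      μ.entropy (fun ω => (X ω, jointObs Y S ω, f (X ω)))
        = μ.entropy (fun ω => (jointObs Y S ω, X ω)) :=
    fun S => μ.entropy_comp
      (g := fun p : ((i : S) → 𝒪 i.1) × α => (p.2, p.1, f p.2))
      (fun p q h => by
        simp only [Prod.mk.injEq] at h
        exact Prod.ext h.2.1 h.1) (fun ω => (jointObs Y S ω, X ω))
  have c1 := entropy_jointObs μ X Y hCI (A ∪ B)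
  have c2 := entropy_jointObs μ X Y hCI (A ∩ B)
  have c3 := entropy_jointObs μ X Y hCI A
  have c4 := entropy_jointObs μ X Y hCI B
  have hsum : (∑ i ∈ A ∪ B, μ.entropy (fun ω => (Y i ω, X ω)))
      + ∑ i ∈ A ∩ B, μ.entropy (fun ω => (Y i ω, X ω))
      = (∑ i ∈ A, μ.entropy (fun ω => (Y i ω, X ω)))
        + ∑ i ∈ B, μ.entropy (fun ω => (Y i ω, X ω)) := Finset.sum_union_inter
  have hcard : ((A ∪ B).card : ℝ) * μ.entropy X + ((A ∩ B).card : ℝ) * μ.entropy X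
      = (A.card : ℝ) * μ.entropy X + (B.card : ℝ) * μ.entropy X := by
    rw [← add_mul, ← add_mul]
    congr 1
    exact_mod_cast Finset.card_union_add_card_inter A B
  have covA : ∀ i ∈ A, i ∈ A \ B ∨ i ∈ A ∩ B := by
    intro i hi
    by_cases hb : i ∈ B
    · exact Or.inr (Finset.mem_inter.mpr ⟨hi, hb⟩)
    · exact Or.inl (Finset.mem_sdiff.mpr ⟨hi, hb⟩)
  have covB : ∀ i ∈ B, i ∈ B \ A ∨ i ∈ A ∩ B := by
    intro i hi
    by_cases ha : i ∈ A
    · exact Or.inr (Finset.mem_inter.mpr ⟨ha, hi⟩)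
    · exact Or.inl (Finset.mem_sdiff.mpr ⟨hi, ha⟩)
  have covU : ∀ i ∈ A ∪ B, i ∈ A \ B ∨ i ∈ B \ A ∨ i ∈ A ∩ B := by
    intro i hi
    rcases Finset.mem_union.mp hi with ha | hb
    · by_cases hb : i ∈ B
      · exact Or.inr (Or.inr (Finset.mem_inter.mpr ⟨ha, hb⟩))
      · exact Or.inl (Finset.mem_sdiff.mpr ⟨ha, hb⟩)
    · by_cases ha : i ∈ A
      · exact Or.inr (Or.inr (Finset.mem_inter.mpr ⟨ha, hb⟩))
      · exact Or.inr (Or.inl (Finset.mem_sdiff.mpr ⟨hb, ha⟩))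
  have f1 : μ.entropy (fun ω =>
        (jointObs Y (A \ B) ω, (jointObs Y (A ∩ B) ω, f (X ω))))
      = μ.entropy (fun ω => (jointObs Y A ω, f (X ω))) :=
    μ.entropy_comp (res_injective2 Finset.sdiff_subset Finset.inter_subset_left covA)
      (fun ω => (jointObs Y A ω, f (X ω)))
  have f2 : μ.entropy (fun ω =>
        (jointObs Y (B \ A) ω, (jointObs Y (A ∩ B) ω, f (X ω))))
      = μ.entropy (fun ω => (jointObs Y B ω, f (X ω))) :=
    μ.entropy_comp (res_injective2 Finset.sdiff_subset Finset.inter_subset_right covB)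
      (fun ω => (jointObs Y B ω, f (X ω)))
  have f3 : μ.entropy (fun ω =>
        (jointObs Y (A \ B) ω, (jointObs Y (B \ A) ω,
          (jointObs Y (A ∩ B) ω, f (X ω)))))
      = μ.entropy (fun ω => (jointObs Y (A ∪ B) ω, f (X ω))) :=
    μ.entropy_comp (res_injective3
      (Finset.sdiff_subset.trans Finset.subset_union_left)
      (Finset.sdiff_subset.trans Finset.subset_union_right)
      (Finset.inter_subset_left.trans Finset.subset_union_left) covU)
      (fun ω => (jointObs Y (A ∪ B) ω, f (X ω)))
  have hssa : μ.entropy (fun ω =>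
        (jointObs Y (A \ B) ω, (jointObs Y (B \ A) ω,
          (jointObs Y (A ∩ B) ω, f (X ω)))))
      + μ.entropy (fun ω => (jointObs Y (A ∩ B) ω, f (X ω)))
      ≤ μ.entropy (fun ω =>
          (jointObs Y (A \ B) ω, (jointObs Y (A ∩ B) ω, f (X ω))))
        + μ.entropy (fun ω =>
          (jointObs Y (B \ A) ω, (jointObs Y (A ∩ B) ω, f (X ω)))) :=
    μ.ssa (jointObs Y (A \ B)) (jointObs Y (B \ A))
      (fun ω => (jointObs Y (A ∩ B) ω, f (X ω)))
  linarith [c1, c2, c3, c4, hsum, hcard, e2 (A ∪ B), e2 (A ∩ B), e2 A, e2 B,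
    f1, f2, f3, hssa]
end

section
/- In a factored multi-agent POMDP with independent dynamics (environment state S_{e,t} evolving autonomously as a Markov chain, agent states S_{i,t} evolving via P_i(·|S_{i,t−1}, A_{i,t}) independently across agents, independent initial distributions, and each agent's observation depending only on (S_{e,t}, S_{i,t})), the local observation-action sequences Y_i and Y_j of any two distinct agents i ≠ j following local policies are conditionally independent given the environment state sequence X_e = S_{e,0:T}. -/
open Finset

section AuxIndep

lemma sum_ite_pull' {β : Type} [Fintype β] (c : Prop) [Decidable c] (g : β → ℝ) :
    (∑ b : β, if c then g b else 0) = if c then ∑ b : β, g b else 0 := by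
  split_ifs <;> simp

lemma ite_and_pull2 (P R : Prop) [Decidable P] [Decidable R] (t : ℝ) :
    (if P ∧ R then t else 0) = if R then (if P then t else 0) else 0 := by
  split_ifs <;> tauto

lemma ite_and_pull3 (P Q R : Prop) [Decidable P] [Decidable Q] [Decidable R] (t : ℝ) :
    (if P ∧ Q ∧ R then t else 0) = if R then (if P ∧ Q then t else 0) else 0 := by
  split_ifs <;> tauto

lemma sumPi {N : ℕ} {γ : Fin N → Type} [∀ k, Fintype (γ k)] (h : ∀ k, γ k → ℝ) :
    ∑ g : (∀ k, γ k), ∏ k, h k (g k) = ∏ k, ∑ c, h k c := by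
  rw [Finset.prod_univ_sum, Fintype.piFinset_univ]

lemma sum3 {N : ℕ} {S O A : Fin N → Type} [∀ k, Fintype (S k)] [∀ k, Fintype (O k)]
    [∀ k, Fintype (A k)] (F : ∀ k, S k → O k → A k → ℝ) :
    (∑ s : ∀ k, S k, ∑ o : ∀ k, O k, ∑ a : ∀ k, A k, ∏ k, F k (s k) (o k) (a k))
      = ∏ k, ∑ s, ∑ o, ∑ a, F k s o a := by
  have h1 : ∀ (s : ∀ k, S k) (o : ∀ k, O k),
      (∑ a : ∀ k, A k, ∏ k, F k (s k) (o k) (a k)) = ∏ k, ∑ a, F k (s k) (o k) a :=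
    fun s o => sumPi (fun k a => F k (s k) (o k) a)
  simp_rw [h1]
  have h2 : ∀ (s : ∀ k, S k),
      (∑ o : ∀ k, O k, ∏ k, ∑ a, F k (s k) (o k) a) = ∏ k, ∑ o, ∑ a, F k (s k) o a :=
    fun s => sumPi (fun k o => ∑ a, F k (s k) o a)
  simp_rw [h2]
  exact sumPi (fun k s => ∑ o, ∑ a, F k s o a)

lemma abstract_indep {N : ℕ} {Xe : Type} [Fintype Xe] [DecidableEq Xe]
    {S O A : Fin N → Type}
    [∀ k, Fintype (S k)] [∀ k, Fintype (O k)] [∀ k, Fintype (A k)]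
    [∀ k, DecidableEq (S k)] [∀ k, DecidableEq (O k)] [∀ k, DecidableEq (A k)]
    (μ : DiscProb (Xe × (∀ k, S k) × (∀ k, O k) × (∀ k, A k)))
    (We : Xe → ℝ) (f : Xe → ∀ k, S k → O k → A k → ℝ)
    (hw : ∀ ω, μ.w ω = We ω.1 * ∏ k, f ω.1 k (ω.2.1 k) (ω.2.2.1 k) (ω.2.2.2 k))
    (i j : Fin N) (hij : i ≠ j) :
    pairCondIndepGiven μ (fun ω => (ω.2.2.1 i, ω.2.2.2 i))
      (fun ω => (ω.2.2.1 j, ω.2.2.2 j)) (fun ω => ω.1) := by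
  classical
  intro y₁ y₂ x
  have hsplit : ∀ (g : Fin N → ℝ),
      ∏ k, g k = g i * (g j * ∏ k ∈ (Finset.univ.erase i).erase j, g k) := by
    intro g
    rw [← Finset.mul_prod_erase Finset.univ g (Finset.mem_univ i),
        ← Finset.mul_prod_erase (Finset.univ.erase i) g
          (Finset.mem_erase.mpr ⟨Ne.symm hij, Finset.mem_univ j⟩)]
  set vi : S i → O i → A i → ℝ :=
    fun s o a => if (o, a) = y₁ then f x i s o a else 0 with hvi
  set vj : S j → O j → A j → ℝ :=
    fun s o a => if (o, a) = y₂ then f x j s o a else 0 with hvj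
  have hresti : ∀ (s : ∀ k, S k) (o : ∀ k, O k) (a : ∀ k, A k),
      ∏ k ∈ (Finset.univ.erase i).erase j,
          Function.update (f x) i vi k (s k) (o k) (a k)
        = ∏ k ∈ (Finset.univ.erase i).erase j, f x k (s k) (o k) (a k) :=
    fun s o a => Finset.prod_congr rfl (fun k hk => by
      rw [Function.update_of_ne (Finset.ne_of_mem_erase (Finset.mem_of_mem_erase hk))])
  have hrestj : ∀ (s : ∀ k, S k) (o : ∀ k, O k) (a : ∀ k, A k),
      ∏ k ∈ (Finset.univ.erase i).erase j,
          Function.update (f x) j vj k (s k) (o k) (a k)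
        = ∏ k ∈ (Finset.univ.erase i).erase j, f x k (s k) (o k) (a k) :=
    fun s o a => Finset.prod_congr rfl (fun k hk => by
      rw [Function.update_of_ne (Finset.ne_of_mem_erase hk)])
  have hrestij : ∀ (s : ∀ k, S k) (o : ∀ k, O k) (a : ∀ k, A k),
      ∏ k ∈ (Finset.univ.erase i).erase j,
          Function.update (Function.update (f x) i vi) j vj k (s k) (o k) (a k)
        = ∏ k ∈ (Finset.univ.erase i).erase j, f x k (s k) (o k) (a k) :=
    fun s o a => Finset.prod_congr rfl (fun k hk => by
      rw [Function.update_of_ne (Finset.ne_of_mem_erase hk),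
        Function.update_of_ne (Finset.ne_of_mem_erase (Finset.mem_of_mem_erase hk))])
  have h0 : μ.prob (fun ω => ω.1) x = We x * ∏ k, ∑ s, ∑ o, ∑ a, f x k s o a := by
    simp only [DiscProb.prob, Finset.sum_filter, Fintype.sum_prod_type]
    simp only [sum_ite_pull' (c := _ = x), Finset.sum_ite_eq', Finset.mem_univ, if_true]
    simp only [hw]
    simp_rw [← Finset.mul_sum]
    rw [sum3 (f x)]
  have h1 : μ.prob (fun ω => ((ω.2.2.1 i, ω.2.2.2 i), ω.1)) (y₁, x)
      = We x * ∏ k, ∑ s, ∑ o, ∑ a, Function.update (f x) i vi k s o a := by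
    simp only [DiscProb.prob, Finset.sum_filter, Fintype.sum_prod_type]
    simp only [Prod.mk.injEq]
    simp only [ite_and_pull2, sum_ite_pull', Finset.sum_ite_eq', Finset.mem_univ, if_true]
    simp only [hw]
    have key : ∀ (s : ∀ k, S k) (o : ∀ k, O k) (a : ∀ k, A k),
        (if (o i, a i) = y₁ then We x * ∏ k, f x k (s k) (o k) (a k) else 0)
          = We x * ∏ k, Function.update (f x) i vi k (s k) (o k) (a k) := by
      intro s o a
      rw [hsplit (fun k => f x k (s k) (o k) (a k)),
          hsplit (fun k => Function.update (f x) i vi k (s k) (o k) (a k))]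
      rw [hresti s o a, Function.update_self, Function.update_of_ne (Ne.symm hij)]
      simp only [hvi]
      split_ifs <;> ring
    simp_rw [key]
    simp_rw [← Finset.mul_sum]
    rw [sum3 (Function.update (f x) i vi)]
  have h2 : μ.prob (fun ω => ((ω.2.2.1 j, ω.2.2.2 j), ω.1)) (y₂, x)
      = We x * ∏ k, ∑ s, ∑ o, ∑ a, Function.update (f x) j vj k s o a := by
    simp only [DiscProb.prob, Finset.sum_filter, Fintype.sum_prod_type]
    simp only [Prod.mk.injEq]
    simp only [ite_and_pull2, sum_ite_pull', Finset.sum_ite_eq', Finset.mem_univ, if_true]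
    simp only [hw]
    have key : ∀ (s : ∀ k, S k) (o : ∀ k, O k) (a : ∀ k, A k),
        (if (o j, a j) = y₂ then We x * ∏ k, f x k (s k) (o k) (a k) else 0)
          = We x * ∏ k, Function.update (f x) j vj k (s k) (o k) (a k) := by
      intro s o a
      rw [hsplit (fun k => f x k (s k) (o k) (a k)),
          hsplit (fun k => Function.update (f x) j vj k (s k) (o k) (a k))]
      rw [hrestj s o a, Function.update_self, Function.update_of_ne hij]
      simp only [hvj]
      split_ifs <;> ring
    simp_rw [key]
    simp_rw [← Finset.mul_sum]
    rw [sum3 (Function.update (f x) j vj)]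
  have h12 : μ.prob (fun ω => ((ω.2.2.1 i, ω.2.2.2 i), (ω.2.2.1 j, ω.2.2.2 j), ω.1))
        (y₁, y₂, x)
      = We x * ∏ k, ∑ s, ∑ o, ∑ a,
          Function.update (Function.update (f x) i vi) j vj k s o a := by
    simp only [DiscProb.prob, Finset.sum_filter, Fintype.sum_prod_type]
    simp only [Prod.mk.injEq]
    simp only [ite_and_pull3, sum_ite_pull', Finset.sum_ite_eq', Finset.mem_univ, if_true]
    simp only [hw]
    have key : ∀ (s : ∀ k, S k) (o : ∀ k, O k) (a : ∀ k, A k),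
        (if (o i, a i) = y₁ ∧ (o j, a j) = y₂
            then We x * ∏ k, f x k (s k) (o k) (a k) else 0)
          = We x * ∏ k, Function.update (Function.update (f x) i vi) j vj k
              (s k) (o k) (a k) := by
      intro s o a
      rw [hsplit (fun k => f x k (s k) (o k) (a k)),
          hsplit (fun k => Function.update (Function.update (f x) i vi) j vj k
            (s k) (o k) (a k))]
      rw [hrestij s o a, Function.update_self, Function.update_of_ne hij,
        Function.update_self]
      simp only [hvi, hvj]
      split_ifs <;> first | ring1 | (exfalso; tauto)
    simp_rw [key]
    simp_rw [← Finset.mul_sum]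
    rw [sum3 (Function.update (Function.update (f x) i vi) j vj)]
  rw [h0, h1, h2, h12]
  rw [hsplit (fun k => ∑ s, ∑ o, ∑ a, f x k s o a),
      hsplit (fun k => ∑ s, ∑ o, ∑ a, Function.update (f x) i vi k s o a),
      hsplit (fun k => ∑ s, ∑ o, ∑ a, Function.update (f x) j vj k s o a),
      hsplit (fun k => ∑ s, ∑ o, ∑ a,
        Function.update (Function.update (f x) i vi) j vj k s o a)]
  simp only [Function.update_self, Function.update_of_ne hij,
    Function.update_of_ne (Ne.symm hij)]
  have e1 : ∏ k ∈ (Finset.univ.erase i).erase j,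
      (∑ s, ∑ o, ∑ a, Function.update (f x) i vi k s o a)
      = ∏ k ∈ (Finset.univ.erase i).erase j, ∑ s, ∑ o, ∑ a, f x k s o a :=
    Finset.prod_congr rfl (fun k hk => by
      rw [Function.update_of_ne (Finset.ne_of_mem_erase (Finset.mem_of_mem_erase hk))])
  have e2 : ∏ k ∈ (Finset.univ.erase i).erase j,
      (∑ s, ∑ o, ∑ a, Function.update (f x) j vj k s o a)
      = ∏ k ∈ (Finset.univ.erase i).erase j, ∑ s, ∑ o, ∑ a, f x k s o a :=
    Finset.prod_congr rfl (fun k hk => by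
      rw [Function.update_of_ne (Finset.ne_of_mem_erase hk)])
  have e3 : ∏ k ∈ (Finset.univ.erase i).erase j,
      (∑ s, ∑ o, ∑ a, Function.update (Function.update (f x) i vi) j vj k s o a)
      = ∏ k ∈ (Finset.univ.erase i).erase j, ∑ s, ∑ o, ∑ a, f x k s o a :=
    Finset.prod_congr rfl (fun k hk => by
      rw [Function.update_of_ne (Finset.ne_of_mem_erase hk),
        Function.update_of_ne (Finset.ne_of_mem_erase (Finset.mem_of_mem_erase hk))])
  rw [e1, e2, e3]
  ring

end AuxIndep

/-- in a factored multi-agent POMDP (autonomous environment chain,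
independent agent dynamics and initial distributions, local observations depending
only on `(s_e, s_i)`, local policies), the local observation-action sequences of any
two distinct agents are conditionally independent given the environment state
sequence `X_e = S_{e,0:T}`. The hypothesis `hw` states the factored law. -/
theorem factored_pomdp_pairwise_cond_indep
    (T N : ℕ) {Se : Type} [Fintype Se] [DecidableEq Se]
    {Si O A : Fin N → Type}
    [∀ i, Fintype (Si i)] [∀ i, DecidableEq (Si i)]
    [∀ i, Fintype (O i)] [∀ i, DecidableEq (O i)]
    [∀ i, Fintype (A i)] [∀ i, DecidableEq (A i)]
    (μe : Se → ℝ) (hμe : ∀ s, 0 ≤ μe s) (hμesum : ∑ s, μe s = 1)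
    (Pe : Se → Se → ℝ) (hPe : ∀ s s', 0 ≤ Pe s s') (hPesum : ∀ s, ∑ s', Pe s s' = 1)
    (μ0 : ∀ i, Si i → ℝ) (hμ0 : ∀ i s, 0 ≤ μ0 i s) (hμ0sum : ∀ i, ∑ s, μ0 i s = 1)
    (Pi : ∀ i, Si i → A i → Si i → ℝ) (hPi : ∀ i s a s', 0 ≤ Pi i s a s')
    (hPisum : ∀ i s a, ∑ s', Pi i s a s' = 1)
    (E : ∀ i, Se → Si i → O i → ℝ) (hE : ∀ i se s o, 0 ≤ E i se s o)
    (hEsum : ∀ i se s, ∑ o, E i se s o = 1)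
    (π : ∀ i, Fin (T + 1) → (Fin (T + 1) → O i) → (Fin (T + 1) → A i) → A i → ℝ)
    (hπ : ∀ i t o a b, 0 ≤ π i t o a b)
    (hπsum : ∀ i t o a, ∑ b, π i t o a b = 1)
    (hlocal : ∀ i t o o' a a', (∀ t' : Fin (T + 1), t' ≤ t → o t' = o' t') →
        (∀ t' : Fin (T + 1), t' < t → a t' = a' t') → π i t o a = π i t o' a')
    (μ : DiscProb ((Fin (T + 1) → Se) × (∀ i, Fin (T + 1) → Si i) ×
          (∀ i, Fin (T + 1) → O i) × (∀ i, Fin (T + 1) → A i)))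
    (hw : ∀ ω : (Fin (T + 1) → Se) × (∀ i, Fin (T + 1) → Si i) ×
          (∀ i, Fin (T + 1) → O i) × (∀ i, Fin (T + 1) → A i),
        μ.w ω = μe (ω.1 0)
          * (∏ t : Fin T, Pe (ω.1 t.castSucc) (ω.1 t.succ))
          * (∏ i, μ0 i (ω.2.1 i 0))
          * (∏ i, ∏ t : Fin T,
              Pi i (ω.2.1 i t.castSucc) (ω.2.2.2 i t.castSucc) (ω.2.1 i t.succ))
          * (∏ i, ∏ t, E i (ω.1 t) (ω.2.1 i t) (ω.2.2.1 i t))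
          * (∏ i, ∏ t, π i t (ω.2.2.1 i) (ω.2.2.2 i) (ω.2.2.2 i t)))
    (i j : Fin N) (hij : i ≠ j) :
    pairCondIndepGiven μ (fun ω => (ω.2.2.1 i, ω.2.2.2 i))
      (fun ω => (ω.2.2.1 j, ω.2.2.2 j)) (fun ω => ω.1) := by
  refine abstract_indep μ
    (fun xe => μe (xe 0) * ∏ t : Fin T, Pe (xe t.castSucc) (xe t.succ))
    (fun xe k s o a => μ0 k (s 0)
      * (∏ t : Fin T, Pi k (s t.castSucc) (a t.castSucc) (s t.succ))
      * (∏ t, E k (xe t) (s t) (o t))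
      * (∏ t, π k t o a (a t))) (fun ω => ?_) i j hij
  rw [hw ω]
  simp only [Finset.prod_mul_distrib]
  ring
end
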